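/- arXiv:2503.09921 — 5 statements merged into one kernel-verified Lean document; each statement's English description precedes it below -/
import Mathlib

section
/- Let H(R, φ, z) be a generalized Weyl algebra with z a central non-zero-divisor of R. Then H(R, φ, z) is a free left R-module with basis {1} ∪ {xⁿ : n ≥ 1} ∪ {yⁿ : n ≥ 1}, that is, H(R, φ, z) = R ⊕ ⨁_{n≥1} Rxⁿ ⊕ ⨁_{n≥1} Ryⁿ; likewise it is a free right R-module on the same basis, H(R, φ, z) = R ⊕ ⨁_{n≥1} xⁿR ⊕ ⨁_{n≥1} yⁿR. -/
universe u

variable (R : Type u) [Ring R] (φ : R ≃+* R) (z : R)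

/-- The defining relations of the generalized Weyl algebra `H(R, φ, z)`, presented as a quotient
of the free `ℤ`-algebra on the underlying set of `R` together with two generators `x` (encoded
as `Sum.inr 0`) and `y` (encoded as `Sum.inr 1`).  The first three families of relations encode
the ring structure of `R`; the remaining ones are the GWA relations
`yx = z`, `xy = φ⁻¹(z)`, `xr = φ⁻¹(r)x`, `yr = φ(r)y`. -/
inductive GWARel : FreeAlgebra ℤ (R ⊕ Fin 2) → FreeAlgebra ℤ (R ⊕ Fin 2) → Prop
  | add (r s : R) : GWARel
      (FreeAlgebra.ι ℤ (Sum.inl r) + FreeAlgebra.ι ℤ (Sum.inl s))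
      (FreeAlgebra.ι ℤ (Sum.inl (r + s)))
  | mul (r s : R) : GWARel
      (FreeAlgebra.ι ℤ (Sum.inl r) * FreeAlgebra.ι ℤ (Sum.inl s))
      (FreeAlgebra.ι ℤ (Sum.inl (r * s)))
  | one : GWARel (FreeAlgebra.ι ℤ (Sum.inl (1 : R))) 1
  | yx : GWARel (FreeAlgebra.ι ℤ (Sum.inr 1) * FreeAlgebra.ι ℤ (Sum.inr 0))
      (FreeAlgebra.ι ℤ (Sum.inl z))
  | xy : GWARel (FreeAlgebra.ι ℤ (Sum.inr 0) * FreeAlgebra.ι ℤ (Sum.inr 1))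
      (FreeAlgebra.ι ℤ (Sum.inl (φ.symm z)))
  | xr (r : R) : GWARel (FreeAlgebra.ι ℤ (Sum.inr 0) * FreeAlgebra.ι ℤ (Sum.inl r))
      (FreeAlgebra.ι ℤ (Sum.inl (φ.symm r)) * FreeAlgebra.ι ℤ (Sum.inr 0))
  | yr (r : R) : GWARel (FreeAlgebra.ι ℤ (Sum.inr 1) * FreeAlgebra.ι ℤ (Sum.inl r))
      (FreeAlgebra.ι ℤ (Sum.inl (φ r)) * FreeAlgebra.ι ℤ (Sum.inr 1))

/-- The generalized Weyl algebra `H(R, φ, z)`. -/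
abbrev GWA : Type u := RingQuot (GWARel R φ z)

/-- The generator `x` of the generalized Weyl algebra. -/
noncomputable def GWA.X : GWA R φ z :=
  RingQuot.mkRingHom (GWARel R φ z) (FreeAlgebra.ι ℤ (Sum.inr 0))

/-- The generator `y` of the generalized Weyl algebra. -/
noncomputable def GWA.Y : GWA R φ z :=
  RingQuot.mkRingHom (GWARel R φ z) (FreeAlgebra.ι ℤ (Sum.inr 1))

/-- The canonical ring homomorphism `R → H(R, φ, z)`. -/
noncomputable def GWA.ofBase : R →+* GWA R φ z where
  toFun r := RingQuot.mkRingHom (GWARel R φ z) (FreeAlgebra.ι ℤ (Sum.inl r))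
  map_one' := by
    have := RingQuot.mkRingHom_rel (GWARel.one (R := R) (φ := φ) (z := z))
    simpa using this
  map_mul' r s := by
    have := RingQuot.mkRingHom_rel (GWARel.mul (φ := φ) (z := z) r s)
    simp only [map_mul] at this
    exact this.symm
  map_zero' := by
    have := RingQuot.mkRingHom_rel (GWARel.add (φ := φ) (z := z) 0 0)
    simp only [map_add, add_zero] at this
    exact add_eq_left.mp this
  map_add' r s := by
    have := RingQuot.mkRingHom_rel (GWARel.add (φ := φ) (z := z) r s)
    simp only [map_add] at this
    exact this.symm


section GWAaux

noncomputable instance : Algebra ℤ (AddMonoid.End (ℤ →₀ R)) := Ring.toIntAlgebra (AddMonoid.End (ℤ →₀ R))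

/-- iterated ring automorphism -/
def iterEq (ψ : R ≃+* R) : ℕ → R ≃+* R
  | 0 => RingEquiv.refl R
  | k+1 => (iterEq ψ k).trans ψ

lemma iterEq_succ_apply (ψ : R ≃+* R) (k : ℕ) (r : R) :
    iterEq R ψ (k+1) r = ψ (iterEq R ψ k r) := rfl

noncomputable def Lop (r : R) : AddMonoid.End (ℤ →₀ R) :=
  (Finsupp.mapRange.addMonoidHom (AddMonoidHom.mulLeft r) : (ℤ →₀ R) →+ (ℤ →₀ R))

noncomputable def Xop : AddMonoid.End (ℤ →₀ R) :=
  (Finsupp.liftAddHom (fun n : ℤ =>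
    (Finsupp.singleAddHom (n+1)).comp
      ((AddMonoidHom.mulRight (if 0 ≤ n then 1 else φ.symm z)).comp
        (φ.symm : R →+* R).toAddMonoidHom)) : (ℤ →₀ R) →+ (ℤ →₀ R))

noncomputable def Yop : AddMonoid.End (ℤ →₀ R) :=
  (Finsupp.liftAddHom (fun n : ℤ =>
    (Finsupp.singleAddHom (n-1)).comp
      ((AddMonoidHom.mulRight (if 1 ≤ n then z else 1)).comp
        (φ : R →+* R).toAddMonoidHom)) : (ℤ →₀ R) →+ (ℤ →₀ R))

@[simp] lemma Lop_single (r : R) (n : ℤ) (c : R) :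
    Lop R r (Finsupp.single n c) = Finsupp.single n (r * c) := by
  classical
  show Finsupp.mapRange _ (map_zero _) _ = _
  rw [Finsupp.mapRange_single]
  rfl

@[simp] lemma Xop_single (n : ℤ) (c : R) :
    Xop R φ z (Finsupp.single n c)
      = Finsupp.single (n+1) (φ.symm c * (if 0 ≤ n then 1 else φ.symm z)) := by
  classical
  exact Finsupp.liftAddHom_apply_single _ _ _

@[simp] lemma Yop_single (n : ℤ) (c : R) :
    Yop R φ z (Finsupp.single n c)
      = Finsupp.single (n-1) (φ c * (if 1 ≤ n then z else 1)) := by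
  classical
  exact Finsupp.liftAddHom_apply_single _ _ _

lemma symm_z_comm (hzc : ∀ g : R, g * z = z * g) (g : R) :
    g * φ.symm z = φ.symm z * g := by
  apply φ.injective
  simp only [map_mul, RingEquiv.apply_symm_apply]
  exact hzc (φ g)

lemma YX_eq (hzc : ∀ g : R, g * z = z * g) :
    Yop R φ z * Xop R φ z = Lop R z := by
  apply Finsupp.addHom_ext
  intro n c
  show Yop R φ z (Xop R φ z (Finsupp.single n c)) = Lop R z (Finsupp.single n c)
  rw [Xop_single, Yop_single, Lop_single]
  rcases le_or_gt 0 n with h | h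
  · have h1 : (1:ℤ) ≤ n + 1 := by omega
    rw [if_pos h, if_pos h1, add_sub_cancel_right, mul_one,
      RingEquiv.apply_symm_apply, hzc c]
  · have h1 : ¬ (1:ℤ) ≤ n + 1 := by omega
    rw [if_neg (not_le.2 h), if_neg h1, add_sub_cancel_right, mul_one, map_mul,
      RingEquiv.apply_symm_apply, RingEquiv.apply_symm_apply, hzc c]

lemma XY_eq (hzc : ∀ g : R, g * z = z * g) :
    Xop R φ z * Yop R φ z = Lop R (φ.symm z) := by
  apply Finsupp.addHom_ext
  intro n c
  show Xop R φ z (Yop R φ z (Finsupp.single n c)) = Lop R (φ.symm z) (Finsupp.single n c)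
  rw [Yop_single, Xop_single, Lop_single]
  rcases le_or_gt 1 n with h | h
  · have h1 : (0:ℤ) ≤ n - 1 := by omega
    rw [if_pos h, if_pos h1, sub_add_cancel, mul_one, map_mul,
      RingEquiv.symm_apply_apply, symm_z_comm R φ z hzc c]
  · have h1 : ¬ (0:ℤ) ≤ n - 1 := by omega
    rw [if_neg (not_le.2 h), if_neg h1, sub_add_cancel, mul_one,
      RingEquiv.symm_apply_apply, symm_z_comm R φ z hzc c]

lemma XR_eq (r : R) :
    Xop R φ z * Lop R r = Lop R (φ.symm r) * Xop R φ z := by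
  apply Finsupp.addHom_ext
  intro n c
  show Xop R φ z (Lop R r (Finsupp.single n c))
      = Lop R (φ.symm r) (Xop R φ z (Finsupp.single n c))
  rw [Lop_single, Xop_single, Xop_single, Lop_single, map_mul, mul_assoc]

lemma YR_eq (r : R) :
    Yop R φ z * Lop R r = Lop R (φ r) * Yop R φ z := by
  apply Finsupp.addHom_ext
  intro n c
  show Yop R φ z (Lop R r (Finsupp.single n c))
      = Lop R (φ r) (Yop R φ z (Finsupp.single n c))
  rw [Lop_single, Yop_single, Yop_single, Lop_single, map_mul, mul_assoc]

lemma Lop_add (r s : R) : Lop R r + Lop R s = Lop R (r + s) := by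
  apply Finsupp.addHom_ext
  intro n c
  show Lop R r (Finsupp.single n c) + Lop R s (Finsupp.single n c)
      = Lop R (r + s) (Finsupp.single n c)
  rw [Lop_single, Lop_single, Lop_single, ← Finsupp.single_add, add_mul]

lemma Lop_mul (r s : R) : Lop R r * Lop R s = Lop R (r * s) := by
  apply Finsupp.addHom_ext
  intro n c
  show Lop R r (Lop R s (Finsupp.single n c)) = Lop R (r * s) (Finsupp.single n c)
  rw [Lop_single, Lop_single, Lop_single, mul_assoc]

lemma Lop_one : Lop R 1 = 1 := by
  apply Finsupp.addHom_ext
  intro n c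
  show Lop R 1 (Finsupp.single n c) = (1 : AddMonoid.End (ℤ →₀ R)) (Finsupp.single n c)
  rw [Lop_single, one_mul, AddMonoid.End.one_apply]

/-- generators for the representation -/
noncomputable def gens : R ⊕ Fin 2 → AddMonoid.End (ℤ →₀ R) := fun v =>
  Sum.elim (fun r => Lop R r) (fun i => if i = 0 then Xop R φ z else Yop R φ z) v

noncomputable def rhoFree : FreeAlgebra ℤ (R ⊕ Fin 2) →ₐ[ℤ] AddMonoid.End (ℤ →₀ R) :=
  FreeAlgebra.lift ℤ (gens R φ z)

@[simp] lemma rhoFree_inl (r : R) :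
    rhoFree R φ z (FreeAlgebra.ι ℤ (Sum.inl r)) = Lop R r := by
  simp [rhoFree, gens]

@[simp] lemma rhoFree_x :
    rhoFree R φ z (FreeAlgebra.ι ℤ (Sum.inr 0)) = Xop R φ z := by
  simp [rhoFree, gens]

@[simp] lemma rhoFree_y :
    rhoFree R φ z (FreeAlgebra.ι ℤ (Sum.inr 1)) = Yop R φ z := by
  simp [rhoFree, gens]

lemma rhoFree_rel (hzc : ∀ g : R, g * z = z * g) :
    ∀ ⦃a b : FreeAlgebra ℤ (R ⊕ Fin 2)⦄, GWARel R φ z a b →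
      (rhoFree R φ z).toRingHom a = (rhoFree R φ z).toRingHom b := by
  intro a b h
  cases h with
  | add r s => simp [Lop_add]
  | mul r s => simp [Lop_mul]
  | one => simp [Lop_one]
  | yx => simp [YX_eq R φ z hzc]
  | xy => simp [XY_eq R φ z hzc]
  | xr r => simp [XR_eq]
  | yr r => simp [YR_eq]

noncomputable def rho (hzc : ∀ g : R, g * z = z * g) :
    GWA R φ z →+* AddMonoid.End (ℤ →₀ R) :=
  RingQuot.lift ⟨(rhoFree R φ z).toRingHom, rhoFree_rel R φ z hzc⟩

lemma rho_mk (hzc : ∀ g : R, g * z = z * g) (a : FreeAlgebra ℤ (R ⊕ Fin 2)) :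
    rho R φ z hzc (RingQuot.mkRingHom (GWARel R φ z) a) = rhoFree R φ z a :=
  RingQuot.lift_mkRingHom_apply _ _ _

/-! ### GWA-level relations -/

lemma rel_yx : GWA.Y R φ z * GWA.X R φ z = GWA.ofBase R φ z z := by
  have := RingQuot.mkRingHom_rel (GWARel.yx (R := R) (φ := φ) (z := z))
  rw [map_mul] at this
  exact this

lemma rel_xy : GWA.X R φ z * GWA.Y R φ z = GWA.ofBase R φ z (φ.symm z) := by
  have := RingQuot.mkRingHom_rel (GWARel.xy (R := R) (φ := φ) (z := z))
  rw [map_mul] at this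
  exact this

lemma rel_xr (r : R) :
    GWA.X R φ z * GWA.ofBase R φ z r = GWA.ofBase R φ z (φ.symm r) * GWA.X R φ z := by
  have := RingQuot.mkRingHom_rel (GWARel.xr (R := R) (φ := φ) (z := z) r)
  rw [map_mul, map_mul] at this
  exact this

lemma rel_yr (r : R) :
    GWA.Y R φ z * GWA.ofBase R φ z r = GWA.ofBase R φ z (φ r) * GWA.Y R φ z := by
  have := RingQuot.mkRingHom_rel (GWARel.yr (R := R) (φ := φ) (z := z) r)
  rw [map_mul, map_mul] at this
  exact this

/-- the basis elements -/
noncomputable def bb (n : ℤ) : GWA R φ z :=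
  if 0 ≤ n then GWA.X R φ z ^ n.toNat else GWA.Y R φ z ^ (-n).toNat

lemma bb_zero : bb R φ z 0 = 1 := by simp [bb]

lemma X_mul_bb (n : ℤ) :
    GWA.X R φ z * bb R φ z n
      = GWA.ofBase R φ z (if 0 ≤ n then 1 else φ.symm z) * bb R φ z (n + 1) := by
  rcases le_or_gt 0 n with h | h
  · rw [if_pos h, map_one, one_mul, bb, if_pos h, bb, if_pos (by omega : (0:ℤ) ≤ n + 1),
      ← pow_succ']
    congr 1
    omega
  · have hb : bb R φ z (n + 1) = GWA.Y R φ z ^ ((-(n+1)).toNat) := by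
      rw [bb]
      rcases lt_or_eq_of_le (show n + 1 ≤ 0 by omega) with h1 | h1
      · rw [if_neg (show ¬ (0:ℤ) ≤ n + 1 by omega)]
      · rw [if_pos (show (0:ℤ) ≤ n + 1 by omega), show n + 1 = 0 from h1]
        norm_num
    rw [if_neg (not_le.2 h), bb, if_neg (not_le.2 h), hb]
    have hm : (-n).toNat = ((-(n+1)).toNat) + 1 := by omega
    rw [hm, pow_succ', ← mul_assoc, rel_xy]

lemma Y_mul_bb (n : ℤ) :
    GWA.Y R φ z * bb R φ z n
      = GWA.ofBase R φ z (if 1 ≤ n then z else 1) * bb R φ z (n - 1) := by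
  rcases le_or_gt 1 n with h | h
  · rw [if_pos h, bb, if_pos (by omega : (0:ℤ) ≤ n), bb, if_pos (by omega : (0:ℤ) ≤ n - 1)]
    have hm : n.toNat = (n - 1).toNat + 1 := by omega
    rw [hm, pow_succ', ← mul_assoc, rel_yx]
  · have hb : bb R φ z n = GWA.Y R φ z ^ ((-n).toNat) := by
      rw [bb]
      rcases lt_or_eq_of_le (show n ≤ 0 by omega) with h1 | h1
      · rw [if_neg (show ¬ (0:ℤ) ≤ n by omega)]
      · rw [if_pos (show (0:ℤ) ≤ n by omega), show n = 0 from h1]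
        norm_num
    rw [if_neg (not_le.2 h), map_one, one_mul, hb, bb, if_neg (by omega : ¬ (0:ℤ) ≤ n - 1),
      ← pow_succ']
    congr 1
    omega


lemma Xpow_ofBase (k : ℕ) (r : R) :
    GWA.X R φ z ^ k * GWA.ofBase R φ z r
      = GWA.ofBase R φ z (iterEq R φ.symm k r) * GWA.X R φ z ^ k := by
  induction k with
  | zero => simp [iterEq]
  | succ k ih =>
    rw [pow_succ', mul_assoc, ih, ← mul_assoc, rel_xr, iterEq_succ_apply, mul_assoc]

lemma Ypow_ofBase (k : ℕ) (r : R) :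
    GWA.Y R φ z ^ k * GWA.ofBase R φ z r
      = GWA.ofBase R φ z (iterEq R (φ : R ≃+* R) k r) * GWA.Y R φ z ^ k := by
  induction k with
  | zero => simp [iterEq]
  | succ k ih =>
    rw [pow_succ', mul_assoc, ih, ← mul_assoc, rel_yr, iterEq_succ_apply, mul_assoc]

/-- the basis-change automorphisms -/
noncomputable def sig (n : ℤ) : R ≃+* R :=
  if 0 ≤ n then iterEq R φ.symm n.toNat else iterEq R (φ : R ≃+* R) (-n).toNat

lemma bb_mul_ofBase (n : ℤ) (r : R) :
    bb R φ z n * GWA.ofBase R φ z r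
      = GWA.ofBase R φ z (sig R φ n r) * bb R φ z n := by
  rcases le_or_gt 0 n with h | h
  · rw [bb, if_pos h, sig, if_pos h, Xpow_ofBase]
  · rw [bb, if_neg (not_le.2 h), sig, if_neg (not_le.2 h), Ypow_ofBase]

/-! ### the comparison map -/

noncomputable def Phi : (ℤ →₀ R) →+ GWA R φ z :=
  Finsupp.liftAddHom fun n =>
    (AddMonoidHom.mulRight (bb R φ z n)).comp (GWA.ofBase R φ z).toAddMonoidHom

lemma Phi_single (n : ℤ) (r : R) :
    Phi R φ z (Finsupp.single n r) = GWA.ofBase R φ z r * bb R φ z n := by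
  classical
  exact Finsupp.liftAddHom_apply_single _ _ _

lemma Phi_apply (c : ℤ →₀ R) :
    Phi R φ z c = c.sum fun n r => GWA.ofBase R φ z r * bb R φ z n :=
  Finsupp.liftAddHom_apply _ _

lemma Phi_Lop (r : R) (m : ℤ →₀ R) :
    Phi R φ z (Lop R r m) = GWA.ofBase R φ z r * Phi R φ z m := by
  have key : (Phi R φ z).comp (Lop R r : (ℤ →₀ R) →+ (ℤ →₀ R))
      = (AddMonoidHom.mulLeft (GWA.ofBase R φ z r)).comp (Phi R φ z) := by
    apply Finsupp.addHom_ext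
    intro n c
    simp only [AddMonoidHom.coe_comp, Function.comp_apply, AddMonoidHom.coe_mulLeft]
    show Phi R φ z (Lop R r (Finsupp.single n c)) = _
    rw [Lop_single, Phi_single, Phi_single, map_mul, mul_assoc]
  exact DFunLike.congr_fun key m

lemma Phi_Xop (m : ℤ →₀ R) :
    Phi R φ z (Xop R φ z m) = GWA.X R φ z * Phi R φ z m := by
  have key : (Phi R φ z).comp (Xop R φ z : (ℤ →₀ R) →+ (ℤ →₀ R))
      = (AddMonoidHom.mulLeft (GWA.X R φ z)).comp (Phi R φ z) := by
    apply Finsupp.addHom_ext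
    intro n c
    simp only [AddMonoidHom.coe_comp, Function.comp_apply, AddMonoidHom.coe_mulLeft]
    show Phi R φ z (Xop R φ z (Finsupp.single n c)) = _
    rw [Xop_single, Phi_single, Phi_single, ← mul_assoc, rel_xr, mul_assoc, X_mul_bb,
      map_mul, ← mul_assoc]
  exact DFunLike.congr_fun key m

lemma Phi_Yop (m : ℤ →₀ R) :
    Phi R φ z (Yop R φ z m) = GWA.Y R φ z * Phi R φ z m := by
  have key : (Phi R φ z).comp (Yop R φ z : (ℤ →₀ R) →+ (ℤ →₀ R))
      = (AddMonoidHom.mulLeft (GWA.Y R φ z)).comp (Phi R φ z) := by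
    apply Finsupp.addHom_ext
    intro n c
    simp only [AddMonoidHom.coe_comp, Function.comp_apply, AddMonoidHom.coe_mulLeft]
    show Phi R φ z (Yop R φ z (Finsupp.single n c)) = _
    rw [Yop_single, Phi_single, Phi_single, ← mul_assoc, rel_yr, mul_assoc, Y_mul_bb,
      map_mul, ← mul_assoc]
  exact DFunLike.congr_fun key m

lemma Phi_rhoFree (a : FreeAlgebra ℤ (R ⊕ Fin 2)) (m : ℤ →₀ R) :
    Phi R φ z (rhoFree R φ z a m)
      = RingQuot.mkRingHom (GWARel R φ z) a * Phi R φ z m := by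
  induction a using FreeAlgebra.induction generalizing m with
  | grade0 k =>
    rw [AlgHom.commutes]
    show Phi R φ z ((↑k : AddMonoid.End (ℤ →₀ R)) m) = _
    rw [AddMonoid.End.intCast_apply, map_zsmul]
    simp only [eq_intCast, map_intCast, zsmul_eq_mul]
  | grade1 v =>
    rcases v with r | i
    · rw [rhoFree_inl, Phi_Lop]
      rfl
    · rcases i with ⟨iv, hlt⟩
      interval_cases iv
      · show Phi R φ z (rhoFree R φ z (FreeAlgebra.ι ℤ (Sum.inr 0)) m)
            = RingQuot.mkRingHom (GWARel R φ z) (FreeAlgebra.ι ℤ (Sum.inr 0)) * Phi R φ z m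
        rw [rhoFree_x, Phi_Xop]
        rfl
      · show Phi R φ z (rhoFree R φ z (FreeAlgebra.ι ℤ (Sum.inr 1)) m)
            = RingQuot.mkRingHom (GWARel R φ z) (FreeAlgebra.ι ℤ (Sum.inr 1)) * Phi R φ z m
        rw [rhoFree_y, Phi_Yop]
        rfl
  | mul a b iha ihb =>
    rw [map_mul]
    show Phi R φ z (rhoFree R φ z a (rhoFree R φ z b m)) = _
    rw [iha, ihb, map_mul, mul_assoc]
  | add a b iha ihb =>
    rw [map_add]
    show Phi R φ z (rhoFree R φ z a m + rhoFree R φ z b m) = _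
    rw [map_add, iha, ihb, map_add, add_mul]

lemma Xop_pow_single_zero (k : ℕ) :
    (Xop R φ z ^ k) (Finsupp.single (0:ℤ) (1:R)) = Finsupp.single (k:ℤ) 1 := by
  induction k with
  | zero => simp
  | succ k ih =>
    rw [pow_succ']
    show Xop R φ z ((Xop R φ z ^ k) (Finsupp.single (0:ℤ) (1:R))) = _
    rw [ih, Xop_single, if_pos (by positivity : (0:ℤ) ≤ (k:ℤ)), map_one, one_mul]
    norm_num

lemma Yop_pow_single_zero (k : ℕ) :
    (Yop R φ z ^ k) (Finsupp.single (0:ℤ) (1:R)) = Finsupp.single (-(k:ℤ)) 1 := by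
  induction k with
  | zero => simp
  | succ k ih =>
    rw [pow_succ']
    show Yop R φ z ((Yop R φ z ^ k) (Finsupp.single (0:ℤ) (1:R))) = _
    rw [ih, Yop_single, if_neg (by omega : ¬ (1:ℤ) ≤ -(k:ℤ)), map_one, one_mul]
    congr 1
    omega

lemma rho_bb_single (hzc : ∀ g : R, g * z = z * g) (n : ℤ) :
    rho R φ z hzc (bb R φ z n) (Finsupp.single (0:ℤ) (1:R)) = Finsupp.single n 1 := by
  have hX : rho R φ z hzc (GWA.X R φ z) = Xop R φ z := by
    rw [GWA.X, rho_mk, rhoFree_x]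
  have hY : rho R φ z hzc (GWA.Y R φ z) = Yop R φ z := by
    rw [GWA.Y, rho_mk, rhoFree_y]
  rcases le_or_gt 0 n with h | h
  · rw [bb, if_pos h, map_pow, hX, Xop_pow_single_zero]
    congr 1
    omega
  · rw [bb, if_neg (not_le.2 h), map_pow, hY, Yop_pow_single_zero]
    congr 1
    omega

lemma rho_ofBase (hzc : ∀ g : R, g * z = z * g) (r : R) :
    rho R φ z hzc (GWA.ofBase R φ z r) = Lop R r := by
  have : GWA.ofBase R φ z r
      = RingQuot.mkRingHom (GWARel R φ z) (FreeAlgebra.ι ℤ (Sum.inl r)) := rfl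
  rw [this, rho_mk, rhoFree_inl]

lemma coords_Phi (hzc : ∀ g : R, g * z = z * g) (c : ℤ →₀ R) :
    rho R φ z hzc (Phi R φ z c) (Finsupp.single (0:ℤ) (1:R)) = c := by
  induction c using Finsupp.induction with
  | zero => simp
  | single_add n r f _ _ ih =>
    rw [map_add, map_add]
    show rho R φ z hzc (Phi R φ z (Finsupp.single n r)) (Finsupp.single (0:ℤ) (1:R))
        + rho R φ z hzc (Phi R φ z f) (Finsupp.single (0:ℤ) (1:R)) = _
    rw [ih, Phi_single, map_mul, rho_ofBase]
    show Lop R r (rho R φ z hzc (bb R φ z n) (Finsupp.single (0:ℤ) (1:R))) + f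
        = Finsupp.single n r + f
    rw [rho_bb_single, Lop_single, mul_one]

/-! ### twists -/

noncomputable def twist (e : ℤ → R ≃+* R) (c : ℤ →₀ R) : ℤ →₀ R :=
  Finsupp.onFinset c.support (fun n => e n (c n))
    (fun n hne => Finsupp.mem_support_iff.2 fun h0 => hne (by
      show e n (c n) = 0
      rw [h0, map_zero]))

@[simp] lemma twist_apply (e : ℤ → R ≃+* R) (c : ℤ →₀ R) (n : ℤ) :
    twist R e c n = e n (c n) := rfl

lemma twist_twist (e : ℤ → R ≃+* R) (c : ℤ →₀ R) :
    twist R (fun n => (e n).symm) (twist R e c) = c := by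
  ext n
  simp

lemma twist_sum {M : Type u} [AddCommMonoid M] (e : ℤ → R ≃+* R) (c : ℤ →₀ R)
    (g : ℤ → R → M) (hg : ∀ n, g n 0 = 0) :
    (twist R e c).sum g = c.sum fun n r => g n (e n r) := by
  rw [twist, Finsupp.onFinset_sum _ (fun a => hg a)]
  rfl

end GWAaux

/-- A generalized Weyl algebra `H(R, φ, z)` (with `z` a central
non-zero-divisor) is a free left `R`-module with basis `{1} ∪ {xⁿ : n ≥ 1} ∪ {yⁿ : n ≥ 1}`,
i.e. `H = R ⊕ ⨁_{n≥1} Rxⁿ ⊕ ⨁_{n≥1} Ryⁿ`, and likewise a free right `R`-module on the same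
basis, `H = R ⊕ ⨁_{n≥1} xⁿR ⊕ ⨁_{n≥1} yⁿR`.  Freeness is expressed by unique existence of
finitely supported coordinates, the basis being indexed by `ℤ` via `n ↦ xⁿ` for `n ≥ 0` and
`n ↦ y^{-n}` for `n < 0`. -/
theorem statement4 (hz : z ∈ Set.center R)
    (hznzd : (∀ r : R, r * z = 0 → r = 0) ∧ (∀ r : R, z * r = 0 → r = 0)) :
    (∀ h : GWA R φ z, ∃! c : ℤ →₀ R,
        h = c.sum fun n r => GWA.ofBase R φ z r *
          (if 0 ≤ n then (GWA.X R φ z) ^ n.toNat else (GWA.Y R φ z) ^ (-n).toNat)) ∧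
    (∀ h : GWA R φ z, ∃! c : ℤ →₀ R,
        h = c.sum fun n r =>
          (if 0 ≤ n then (GWA.X R φ z) ^ n.toNat else (GWA.Y R φ z) ^ (-n).toNat) *
            GWA.ofBase R φ z r) := by
  classical
  have hzc : ∀ g : R, g * z = z * g := fun g => (hz.comm g).symm
  have key : ∀ h : GWA R φ z,
      h = Phi R φ z (rho R φ z hzc h (Finsupp.single (0:ℤ) (1:R))) := by
    intro h
    obtain ⟨a, rfl⟩ := RingQuot.mkRingHom_surjective _ h
    rw [rho_mk, Phi_rhoFree, Phi_single, map_one, one_mul, bb_zero, mul_one]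
  have left : ∀ h : GWA R φ z, ∃! c : ℤ →₀ R,
      h = c.sum fun n r => GWA.ofBase R φ z r *
        (if 0 ≤ n then (GWA.X R φ z) ^ n.toNat else (GWA.Y R φ z) ^ (-n).toNat) := by
    intro h
    refine ⟨rho R φ z hzc h (Finsupp.single (0:ℤ) (1:R)), ?_, ?_⟩
    · have := key h
      rw [Phi_apply] at this
      simpa only [bb] using this
    · intro c hc
      have hPhi : h = Phi R φ z c := by
        rw [Phi_apply]
        simpa only [bb] using hc
      rw [hPhi, coords_Phi]
  constructor
  · exact left
  · intro h
    obtain ⟨c, hc, hu⟩ := left h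
    have hcPhi : h = Phi R φ z c := by
      rw [Phi_apply]; simpa only [bb] using hc
    have hg0 : ∀ n : ℤ, bb R φ z n * GWA.ofBase R φ z (0:R) = 0 := by
      intro n; rw [map_zero, mul_zero]
    refine ⟨twist R (fun n => (sig R φ n).symm) c, ?_, ?_⟩
    · beta_reduce
      rw [twist_sum R (fun n => (sig R φ n).symm) c
        (fun n r => (if 0 ≤ n then (GWA.X R φ z) ^ n.toNat
          else (GWA.Y R φ z) ^ (-n).toNat) * GWA.ofBase R φ z r)
        (fun n => by
          show (if 0 ≤ n then (GWA.X R φ z) ^ n.toNat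
            else (GWA.Y R φ z) ^ (-n).toNat) * GWA.ofBase R φ z (0:R) = 0
          simpa only [bb] using hg0 n)]
      rw [hcPhi, Phi_apply]
      apply Finsupp.sum_congr
      intro n _
      have : (if 0 ≤ n then (GWA.X R φ z) ^ n.toNat else (GWA.Y R φ z) ^ (-n).toNat)
          = bb R φ z n := rfl
      rw [this, bb_mul_ofBase, RingEquiv.apply_symm_apply]
    · intro d hd
      have hPhid : h = Phi R φ z (twist R (sig R φ) d) := by
        rw [Phi_apply, twist_sum R (sig R φ) d
          (fun n r => GWA.ofBase R φ z r * bb R φ z n)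
          (fun n => by
            show GWA.ofBase R φ z (0:R) * bb R φ z n = 0
            rw [map_zero, zero_mul])]
        rw [hd]
        apply Finsupp.sum_congr
        intro n _
        have : (if 0 ≤ n then (GWA.X R φ z) ^ n.toNat else (GWA.Y R φ z) ^ (-n).toNat)
            = bb R φ z n := rfl
        rw [this, bb_mul_ofBase]
      have hdc : twist R (sig R φ) d = c := hu _ (by
        rw [hPhid, Phi_apply]
        simp only [bb])
      calc d = twist R (fun n => (sig R φ n).symm) (twist R (sig R φ) d) :=
              (twist_twist R (sig R φ) d).symm
        _ = twist R (fun n => (sig R φ n).symm) c := by rw [hdc]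
end

section
/- Let H(R, φ, z) be a generalized Weyl algebra with z a central non-zero-divisor of R, and let R_φ[x, x⁻¹] denote the φ-twisted Laurent polynomial ring over R, i.e. the ring of Laurent polynomials in x over R with multiplication twisted by the rule xr = φ⁻¹(r)x for r ∈ R. Then there is an injective ring homomorphism H(R, φ, z) → R_φ[x, x⁻¹] which is the identity on R and sends x ↦ x and y ↦ z·x⁻¹; its image is the subring of R_φ[x, x⁻¹] generated by R, x, and z·x⁻¹, and inverting x in this image recovers all of R_φ[x, x⁻¹] (every element of R_φ[x, x⁻¹] has the form h·x^{−n} with h in the image and n ≥ 0). -/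
universe u

variable (R : Type u) [Ring R] (φ : R ≃+* R) (z : R)

/-- The defining relations of the `φ`-twisted Laurent polynomial ring `R_φ[x, x⁻¹]`, presented
as a quotient of the free `ℤ`-algebra on the underlying set of `R` together with two generators
`x` (encoded as `Sum.inr true`) and `x⁻¹` (encoded as `Sum.inr false`).  The first three
families of relations encode the ring structure of `R`; the remaining ones say that `x` and
`x⁻¹` are mutually inverse and that `x·r = φ⁻¹(r)·x`. -/
inductive LaurentRel : FreeAlgebra ℤ (R ⊕ Bool) → FreeAlgebra ℤ (R ⊕ Bool) → Prop
  | add (r s : R) : LaurentRel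
      (FreeAlgebra.ι ℤ (Sum.inl r) + FreeAlgebra.ι ℤ (Sum.inl s))
      (FreeAlgebra.ι ℤ (Sum.inl (r + s)))
  | mul (r s : R) : LaurentRel
      (FreeAlgebra.ι ℤ (Sum.inl r) * FreeAlgebra.ι ℤ (Sum.inl s))
      (FreeAlgebra.ι ℤ (Sum.inl (r * s)))
  | one : LaurentRel (FreeAlgebra.ι ℤ (Sum.inl (1 : R))) 1
  | xxinv : LaurentRel (FreeAlgebra.ι ℤ (Sum.inr true) * FreeAlgebra.ι ℤ (Sum.inr false)) 1
  | xinvx : LaurentRel (FreeAlgebra.ι ℤ (Sum.inr false) * FreeAlgebra.ι ℤ (Sum.inr true)) 1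
  | xr (r : R) : LaurentRel (FreeAlgebra.ι ℤ (Sum.inr true) * FreeAlgebra.ι ℤ (Sum.inl r))
      (FreeAlgebra.ι ℤ (Sum.inl (φ.symm r)) * FreeAlgebra.ι ℤ (Sum.inr true))

/-- The `φ`-twisted Laurent polynomial ring `R_φ[x, x⁻¹]`. -/
abbrev TwistedLaurent : Type u := RingQuot (LaurentRel R φ)

/-- The element `x` of the twisted Laurent polynomial ring. -/
noncomputable def TwistedLaurent.x : TwistedLaurent R φ :=
  RingQuot.mkRingHom (LaurentRel R φ) (FreeAlgebra.ι ℤ (Sum.inr true))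

/-- The element `x⁻¹` of the twisted Laurent polynomial ring. -/
noncomputable def TwistedLaurent.xinv : TwistedLaurent R φ :=
  RingQuot.mkRingHom (LaurentRel R φ) (FreeAlgebra.ι ℤ (Sum.inr false))

/-- The canonical ring homomorphism `R → R_φ[x, x⁻¹]`. -/
noncomputable def TwistedLaurent.ofBase : R →+* TwistedLaurent R φ where
  toFun r := RingQuot.mkRingHom (LaurentRel R φ) (FreeAlgebra.ι ℤ (Sum.inl r))
  map_one' := by
    have := RingQuot.mkRingHom_rel (LaurentRel.one (R := R) (φ := φ))
    simpa using this
  map_mul' r s := by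
    have := RingQuot.mkRingHom_rel (LaurentRel.mul (φ := φ) r s)
    simp only [map_mul] at this
    exact this.symm
  map_zero' := by
    have := RingQuot.mkRingHom_rel (LaurentRel.add (φ := φ) (0 : R) 0)
    simp only [map_add, add_zero] at this
    exact add_eq_left.mp this
  map_add' r s := by
    have := RingQuot.mkRingHom_rel (LaurentRel.add (φ := φ) r s)
    simp only [map_add] at this
    exact this.symm


namespace Statement5Aux

open RingQuot

section Laurent
variable {R : Type u} [Ring R] (φ : R ≃+* R)

local notation "TL" => TwistedLaurent R φ
local notation "tx" => TwistedLaurent.x R φ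
local notation "txinv" => TwistedLaurent.xinv R φ
local notation "tof" => TwistedLaurent.ofBase R φ

lemma tof_def (r : R) : tof r = mkRingHom (LaurentRel R φ) (FreeAlgebra.ι ℤ (Sum.inl r)) := rfl

lemma tx_mul_txinv : tx * txinv = 1 := by
  have := RingQuot.mkRingHom_rel (LaurentRel.xxinv (R := R) (φ := φ))
  simpa [TwistedLaurent.x, TwistedLaurent.xinv, map_mul] using this

lemma txinv_mul_tx : txinv * tx = 1 := by
  have := RingQuot.mkRingHom_rel (LaurentRel.xinvx (R := R) (φ := φ))
  simpa [TwistedLaurent.x, TwistedLaurent.xinv, map_mul] using this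

lemma tx_mul_tof (r : R) : tx * tof r = tof (φ.symm r) * tx := by
  have := RingQuot.mkRingHom_rel (LaurentRel.xr (R := R) (φ := φ) r)
  simpa [TwistedLaurent.x, tof_def, map_mul] using this

lemma tof_mul_tx (r : R) : tof r * tx = tx * tof (φ r) := by
  have := tx_mul_tof φ (φ r)
  simpa using this.symm

lemma txinv_mul_tof (r : R) : txinv * tof r = tof (φ r) * txinv := by
  have h : txinv * (tof r * tx) * txinv = txinv * (tx * tof (φ r)) * txinv := by
    rw [tof_mul_tx]
  have hx := tx_mul_txinv φ
  have hxi := txinv_mul_tx φ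
  calc txinv * tof r = txinv * tof r * (tx * txinv) := by rw [hx, mul_one]
    _ = txinv * (tof r * tx) * txinv := by simp [mul_assoc]
    _ = txinv * (tx * tof (φ r)) * txinv := by rw [tof_mul_tx]
    _ = (txinv * tx) * (tof (φ r) * txinv) := by simp [mul_assoc]
    _ = tof (φ r) * txinv := by rw [hxi, one_mul]

lemma txpow_mul_txinvpow (k n : ℕ) : tx ^ k * txinv ^ (k + n) = txinv ^ n := by
  induction k with
  | zero => simp
  | succ k ih =>
    have : tx ^ (k+1) * txinv ^ (k+1+n) = tx ^ k * (tx * txinv) * txinv ^ (k + n) := by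
      rw [pow_succ, show k+1+n = 1 + (k+n) by omega, pow_add, pow_one]
      simp [mul_assoc]
    rw [this, tx_mul_txinv, mul_one, ih]

end Laurent

section GWAside
variable {R : Type u} [Ring R] (φ : R ≃+* R) (z : R)

local notation "gX" => GWA.X R φ z
local notation "gY" => GWA.Y R φ z
local notation "gof" => GWA.ofBase R φ z

lemma gof_def (r : R) : gof r = RingQuot.mkRingHom (GWARel R φ z) (FreeAlgebra.ι ℤ (Sum.inl r)) := rfl

lemma gY_mul_gX : gY * gX = gof z := by
  have := RingQuot.mkRingHom_rel (GWARel.yx (R := R) (φ := φ) (z := z))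
  simpa [GWA.X, GWA.Y, gof_def, map_mul] using this

lemma gX_mul_gY : gX * gY = gof (φ.symm z) := by
  have := RingQuot.mkRingHom_rel (GWARel.xy (R := R) (φ := φ) (z := z))
  simpa [GWA.X, GWA.Y, gof_def, map_mul] using this

lemma gX_mul_gof (r : R) : gX * gof r = gof (φ.symm r) * gX := by
  have := RingQuot.mkRingHom_rel (GWARel.xr (R := R) (φ := φ) (z := z) r)
  simpa [GWA.X, gof_def, map_mul] using this

lemma gY_mul_gof (r : R) : gY * gof r = gof (φ r) * gY := by
  have := RingQuot.mkRingHom_rel (GWARel.yr (R := R) (φ := φ) (z := z) r)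
  simpa [GWA.Y, gof_def, map_mul] using this

lemma gXpow_mul_gof (n : ℕ) (r : R) : ∃ s, gX ^ n * gof r = gof s * gX ^ n := by
  induction n with
  | zero => exact ⟨r, by simp⟩
  | succ n ih =>
    obtain ⟨s, hs⟩ := ih
    refine ⟨φ.symm s, ?_⟩
    calc gX ^ (n+1) * gof r = gX * (gX ^ n * gof r) := by rw [pow_succ']; simp [mul_assoc]
      _ = gX * gof s * gX ^ n := by rw [hs, mul_assoc]
      _ = gof (φ.symm s) * gX ^ (n+1) := by rw [gX_mul_gof, pow_succ']; simp [mul_assoc]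

lemma gYpow_mul_gof (n : ℕ) (r : R) : ∃ s, gY ^ n * gof r = gof s * gY ^ n := by
  induction n with
  | zero => exact ⟨r, by simp⟩
  | succ n ih =>
    obtain ⟨s, hs⟩ := ih
    refine ⟨φ s, ?_⟩
    calc gY ^ (n+1) * gof r = gY * (gY ^ n * gof r) := by rw [pow_succ']; simp [mul_assoc]
      _ = gY * gof s * gY ^ n := by rw [hs, mul_assoc]
      _ = gof (φ s) * gY ^ (n+1) := by rw [gY_mul_gof, pow_succ']; simp [mul_assoc]

lemma gXpow_mul_gYpow (n : ℕ) : ∃ c, gX ^ n * gY ^ n = gof c := by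
  induction n with
  | zero => exact ⟨1, by simp⟩
  | succ n ih =>
    obtain ⟨c, hc⟩ := ih
    have h1 : gX ^ (n+1) * gY ^ (n+1) = gX * (gX ^ n * gY ^ n) * gY := by
      rw [pow_succ', pow_succ]; simp [mul_assoc]
    obtain ⟨s, hs⟩ : ∃ s, gX * gof c = gof s * gX := ⟨φ.symm c, gX_mul_gof φ z c⟩
    refine ⟨s * φ.symm z, ?_⟩
    rw [h1, hc, hs, mul_assoc, gX_mul_gY, ← map_mul]

lemma gYpow_mul_gXpow (n : ℕ) : ∃ c, gY ^ n * gX ^ n = gof c := by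
  induction n with
  | zero => exact ⟨1, by simp⟩
  | succ n ih =>
    obtain ⟨c, hc⟩ := ih
    have h1 : gY ^ (n+1) * gX ^ (n+1) = gY * (gY ^ n * gX ^ n) * gX := by
      rw [pow_succ', pow_succ]; simp [mul_assoc]
    refine ⟨φ c * z, ?_⟩
    rw [h1, hc, gY_mul_gof, mul_assoc, gY_mul_gX, ← map_mul]

/-- `gpow k` is `X^k` for `k ≥ 0` and `Y^(-k)` for `k < 0`. -/
noncomputable def gpow (k : ℤ) : GWA R φ z :=
  if 0 ≤ k then gX ^ k.toNat else gY ^ (-k).toNat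

lemma gpow_zero : gpow φ z 0 = 1 := by simp [gpow]

lemma gpow_nonneg {k : ℤ} (h : 0 ≤ k) : gpow φ z k = gX ^ k.toNat := if_pos h

lemma gpow_neg {k : ℤ} (h : k < 0) : gpow φ z k = gY ^ (-k).toNat := if_neg (by omega)

lemma gpow_mul_gof (k : ℤ) (r : R) : ∃ s, gpow φ z k * gof r = gof s * gpow φ z k := by
  by_cases h : 0 ≤ k
  · rw [gpow_nonneg φ z h]; exact gXpow_mul_gof φ z _ r
  · rw [gpow_neg φ z (by omega)]; exact gYpow_mul_gof φ z _ r

lemma gXpow_mul_gYpow' (a b : ℕ) : ∃ t, gX ^ a * gY ^ b = gof t * gpow φ z ((a : ℤ) - b) := by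
  rcases le_or_gt b a with h | h
  · obtain ⟨c, hc⟩ := gXpow_mul_gYpow φ z b
    obtain ⟨s, hs⟩ := gXpow_mul_gof φ z (a - b) c
    refine ⟨s, ?_⟩
    have h1 : gX ^ a * gY ^ b = gX ^ (a - b) * (gX ^ b * gY ^ b) := by
      rw [← mul_assoc, ← pow_add]; congr 2; omega
    rw [h1, hc, hs, gpow_nonneg φ z (by omega)]
    congr 2; omega
  · obtain ⟨c, hc⟩ := gXpow_mul_gYpow φ z a
    refine ⟨c, ?_⟩
    have h1 : gX ^ a * gY ^ b = (gX ^ a * gY ^ a) * gY ^ (b - a) := by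
      rw [mul_assoc, ← pow_add]; congr 2; omega
    rw [h1, hc, gpow_neg φ z (by omega)]
    congr 2; omega

lemma gYpow_mul_gXpow' (a b : ℕ) : ∃ t, gY ^ a * gX ^ b = gof t * gpow φ z ((b : ℤ) - a) := by
  rcases le_or_gt a b with h | h
  · obtain ⟨c, hc⟩ := gYpow_mul_gXpow φ z a
    refine ⟨c, ?_⟩
    have h1 : gY ^ a * gX ^ b = (gY ^ a * gX ^ a) * gX ^ (b - a) := by
      rw [mul_assoc, ← pow_add]; congr 2; omega
    rw [h1, hc, gpow_nonneg φ z (by omega)]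
    congr 2; omega
  · obtain ⟨c, hc⟩ := gYpow_mul_gXpow φ z b
    obtain ⟨s, hs⟩ := gYpow_mul_gof φ z (a - b) c
    refine ⟨s, ?_⟩
    have h1 : gY ^ a * gX ^ b = gY ^ (a - b) * (gY ^ b * gX ^ b) := by
      rw [← mul_assoc, ← pow_add]; congr 2; omega
    rw [h1, hc, hs, gpow_neg φ z (by omega)]
    congr 2; omega

lemma gpow_mul_gpow (k l : ℤ) : ∃ t, gpow φ z k * gpow φ z l = gof t * gpow φ z (k + l) := by
  by_cases hk : 0 ≤ k <;> by_cases hl : 0 ≤ l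
  · refine ⟨1, ?_⟩
    rw [gpow_nonneg φ z hk, gpow_nonneg φ z hl, gpow_nonneg φ z (by omega), ← pow_add, map_one,
      one_mul]
    congr 1; omega
  · obtain ⟨t, ht⟩ := gXpow_mul_gYpow' φ z k.toNat (-l).toNat
    refine ⟨t, ?_⟩
    rw [gpow_nonneg φ z hk, gpow_neg φ z (by omega), ht]
    congr 2; omega
  · obtain ⟨t, ht⟩ := gYpow_mul_gXpow' φ z (-k).toNat l.toNat
    refine ⟨t, ?_⟩
    rw [gpow_neg φ z (by omega), gpow_nonneg φ z hl, ht]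
    congr 2; omega
  · refine ⟨1, ?_⟩
    rw [gpow_neg φ z (by omega), gpow_neg φ z (by omega), gpow_neg φ z (by omega), ← pow_add,
      map_one, one_mul]
    congr 1; omega

end GWAside
section Theta
variable {R : Type u} [Ring R] (φ : R ≃+* R) (z : R) (hzc : ∀ r : R, z * r = r * z)

local notation "TL" => TwistedLaurent R φ
local notation "tx" => TwistedLaurent.x R φ
local notation "txinv" => TwistedLaurent.xinv R φ
local notation "tof" => TwistedLaurent.ofBase R φ
local notation "gX" => GWA.X R φ z
local notation "gY" => GWA.Y R φ z
local notation "gof" => GWA.ofBase R φ z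

/-- The map on generators. -/
noncomputable def thetaGen : R ⊕ Fin 2 → TL :=
  Sum.elim (fun r => tof r) ![tx, tof z * txinv]

/-- The lift of `thetaGen` to the free algebra. -/
noncomputable def thetaFree : FreeAlgebra ℤ (R ⊕ Fin 2) →+* TL :=
  (FreeAlgebra.lift ℤ (thetaGen φ z)).toRingHom

lemma thetaFree_ι (s : R ⊕ Fin 2) :
    thetaFree φ z (FreeAlgebra.ι ℤ s) = thetaGen φ z s := by
  simp [thetaFree, FreeAlgebra.lift_ι_apply]

include hzc in
lemma thetaFree_rel : ∀ ⦃a b⦄, GWARel R φ z a b → thetaFree φ z a = thetaFree φ z b := by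
  intro a b h
  cases h with
  | add r s => simp [thetaFree_ι, thetaGen, map_add]
  | mul r s => simp [thetaFree_ι, thetaGen, map_mul]
  | one => simp [thetaFree_ι, thetaGen]
  | yx =>
    simp only [map_mul, thetaFree_ι, thetaGen, Sum.elim_inl, Sum.elim_inr,
      Matrix.cons_val_zero, Matrix.cons_val_one, Matrix.head_cons]
    rw [mul_assoc, txinv_mul_tx, mul_one]
  | xy =>
    simp only [map_mul, thetaFree_ι, thetaGen, Sum.elim_inl, Sum.elim_inr,
      Matrix.cons_val_zero, Matrix.cons_val_one, Matrix.head_cons]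
    rw [← mul_assoc, tx_mul_tof, mul_assoc, tx_mul_txinv, mul_one]
  | xr r =>
    simp only [map_mul, thetaFree_ι, thetaGen, Sum.elim_inl, Sum.elim_inr,
      Matrix.cons_val_zero]
    rw [tx_mul_tof]
  | yr r =>
    simp only [map_mul, thetaFree_ι, thetaGen, Sum.elim_inl, Sum.elim_inr,
      Matrix.cons_val_one, Matrix.head_cons, Matrix.cons_val_zero]
    rw [mul_assoc, txinv_mul_tof, ← mul_assoc, ← map_mul, hzc, map_mul, mul_assoc]

/-- The homomorphism `θ : H(R,φ,z) → R_φ[x,x⁻¹]`. -/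
noncomputable def theta : GWA R φ z →+* TL :=
  RingQuot.lift ⟨thetaFree φ z, thetaFree_rel φ z hzc⟩

lemma theta_mk (a : FreeAlgebra ℤ (R ⊕ Fin 2)) :
    theta φ z hzc (RingQuot.mkRingHom (GWARel R φ z) a) = thetaFree φ z a :=
  RingQuot.lift_mkRingHom_apply _ _ _

lemma theta_of (r : R) : theta φ z hzc (gof r) = tof r := by
  rw [gof_def, theta_mk, thetaFree_ι]; rfl

lemma theta_X : theta φ z hzc gX = tx := by
  rw [GWA.X, theta_mk, thetaFree_ι]; rfl

lemma theta_Y : theta φ z hzc gY = tof z * txinv := by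
  rw [GWA.Y, theta_mk, thetaFree_ι]; rfl

end Theta
section Model
variable {R : Type u} [Ring R] (φ : R ≃+* R)

local notation "TL" => TwistedLaurent R φ
local notation "tx" => TwistedLaurent.x R φ
local notation "txinv" => TwistedLaurent.xinv R φ
local notation "tof" => TwistedLaurent.ofBase R φ

/-- Left multiplication by `r` on the model. -/
noncomputable def opR (r : R) : Module.End ℤ (ℤ →₀ R) :=
  (Finsupp.mapRange.addMonoidHom (AddMonoidHom.mulLeft r)).toIntLinearMap

/-- The action of `x` on the model. -/
noncomputable def opX : Module.End ℤ (ℤ →₀ R) :=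
  ((Finsupp.mapRange.addMonoidHom (φ.symm : R →+* R).toAddMonoidHom).comp
    (Finsupp.mapDomain.addMonoidHom (fun n : ℤ => n + 1))).toIntLinearMap

/-- The action of `x⁻¹` on the model. -/
noncomputable def opXinv : Module.End ℤ (ℤ →₀ R) :=
  ((Finsupp.mapRange.addMonoidHom (φ : R →+* R).toAddMonoidHom).comp
    (Finsupp.mapDomain.addMonoidHom (fun n : ℤ => n - 1))).toIntLinearMap

lemma opR_single (r : R) (m : ℤ) (s : R) :
    opR (R := R) r (Finsupp.single m s) = Finsupp.single m (r * s) := by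
  show Finsupp.mapRange (⇑(AddMonoidHom.mulLeft r)) (map_zero _) (Finsupp.single m s) = _
  rw [Finsupp.mapRange_single]
  rfl

lemma opX_single (m : ℤ) (s : R) :
    opX φ (Finsupp.single m s) = Finsupp.single (m + 1) (φ.symm s) := by
  show Finsupp.mapRange (⇑((φ.symm : R →+* R).toAddMonoidHom)) (map_zero _)
      (Finsupp.mapDomain (fun n : ℤ => n + 1) (Finsupp.single m s)) = _
  rw [Finsupp.mapDomain_single, Finsupp.mapRange_single]
  rfl

lemma opXinv_single (m : ℤ) (s : R) :
    opXinv φ (Finsupp.single m s) = Finsupp.single (m - 1) (φ s) := by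
  show Finsupp.mapRange (⇑((φ : R →+* R).toAddMonoidHom)) (map_zero _)
      (Finsupp.mapDomain (fun n : ℤ => n - 1) (Finsupp.single m s)) = _
  rw [Finsupp.mapDomain_single, Finsupp.mapRange_single]
  rfl

/-- The generators of the free algebra are sent to these endomorphisms. -/
noncomputable def rhoGen : R ⊕ Bool → Module.End ℤ (ℤ →₀ R) :=
  Sum.elim (fun r => opR r) (fun b => cond b (opX φ) (opXinv φ))

/-- Lift to the free algebra. -/
noncomputable def rhoFree : FreeAlgebra ℤ (R ⊕ Bool) →+* Module.End ℤ (ℤ →₀ R) :=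
  (FreeAlgebra.lift ℤ (rhoGen φ)).toRingHom

lemma rhoFree_ι (s : R ⊕ Bool) :
    rhoFree φ (FreeAlgebra.ι ℤ s) = rhoGen φ s := by
  simp [rhoFree, FreeAlgebra.lift_ι_apply]

lemma rhoFree_rel : ∀ ⦃a b⦄, LaurentRel R φ a b → rhoFree φ a = rhoFree φ b := by
  intro a b h
  cases h with
  | add r s =>
    simp only [map_add, rhoFree_ι, rhoGen, Sum.elim_inl]
    refine Finsupp.lhom_ext fun m t => ?_
    rw [LinearMap.add_apply, opR_single, opR_single, opR_single, ← Finsupp.single_add, add_mul]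
  | mul r s =>
    simp only [map_mul, rhoFree_ι, rhoGen, Sum.elim_inl]
    refine Finsupp.lhom_ext fun m t => ?_
    rw [Module.End.mul_apply, opR_single, opR_single, opR_single, mul_assoc]
  | one =>
    simp only [rhoFree_ι, rhoGen, Sum.elim_inl, map_one]
    refine Finsupp.lhom_ext fun m t => ?_
    rw [opR_single, one_mul, Module.End.one_apply]
  | xxinv =>
    simp only [map_mul, map_one, rhoFree_ι, rhoGen, Sum.elim_inr, Bool.cond_true, Bool.cond_false]
    refine Finsupp.lhom_ext fun m t => ?_
    rw [Module.End.mul_apply, opXinv_single, opX_single, RingEquiv.symm_apply_apply,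
      Module.End.one_apply, sub_add_cancel]
  | xinvx =>
    simp only [map_mul, map_one, rhoFree_ι, rhoGen, Sum.elim_inr, Bool.cond_true, Bool.cond_false]
    refine Finsupp.lhom_ext fun m t => ?_
    rw [Module.End.mul_apply, opX_single, opXinv_single, RingEquiv.apply_symm_apply,
      Module.End.one_apply, add_sub_cancel_right]
  | xr r =>
    simp only [map_mul, rhoFree_ι, rhoGen, Sum.elim_inl, Sum.elim_inr, Bool.cond_true]
    refine Finsupp.lhom_ext fun m t => ?_
    rw [Module.End.mul_apply, Module.End.mul_apply, opR_single, opX_single, opX_single,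
      opR_single, map_mul]

/-- The representation of the twisted Laurent ring on the model. -/
noncomputable def rho : TL →+* Module.End ℤ (ℤ →₀ R) :=
  RingQuot.lift ⟨rhoFree φ, rhoFree_rel φ⟩

lemma rho_mk (a : FreeAlgebra ℤ (R ⊕ Bool)) :
    rho φ (RingQuot.mkRingHom (LaurentRel R φ) a) = rhoFree φ a :=
  RingQuot.lift_mkRingHom_apply _ _ _

lemma rho_of (r : R) : rho φ (tof r) = opR r := by
  rw [tof_def, rho_mk, rhoFree_ι]; rfl

lemma rho_x : rho φ tx = opX φ := by
  rw [TwistedLaurent.x, rho_mk, rhoFree_ι]; rfl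

lemma rho_xinv : rho φ txinv = opXinv φ := by
  rw [TwistedLaurent.xinv, rho_mk, rhoFree_ι]; rfl

/-- Coefficient extraction. -/
noncomputable def coeff (w : TL) : ℤ →₀ R := rho φ w (Finsupp.single 0 1)

lemma coeff_zero : coeff φ 0 = 0 := by simp [coeff, map_zero]

lemma coeff_add (a b : TL) : coeff φ (a + b) = coeff φ a + coeff φ b := by
  simp [coeff, map_add]

lemma opX_pow_single (n : ℕ) :
    ((opX φ) ^ n) (Finsupp.single 0 (1 : R)) = Finsupp.single (n : ℤ) 1 := by
  induction n with
  | zero => simp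
  | succ n ih =>
    rw [pow_succ', Module.End.mul_apply, ih, opX_single, map_one]
    norm_cast

lemma opXinv_pow_single (n : ℕ) :
    ((opXinv φ) ^ n) (Finsupp.single 0 (1 : R)) = Finsupp.single (-(n : ℤ)) 1 := by
  induction n with
  | zero => simp
  | succ n ih =>
    rw [pow_succ', Module.End.mul_apply, ih, opXinv_single, map_one]
    congr 1
    push_cast
    ring

lemma coeff_mono_pos (b : R) (n : ℕ) :
    coeff φ (tof b * tx ^ n) = Finsupp.single (n : ℤ) b := by
  rw [coeff, map_mul, map_pow, Module.End.mul_apply, rho_x, opX_pow_single, rho_of, opR_single,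
    mul_one]

lemma coeff_mono_neg (a : R) (n : ℕ) :
    coeff φ (tof a * txinv ^ n) = Finsupp.single (-(n : ℤ)) a := by
  rw [coeff, map_mul, map_pow, Module.End.mul_apply, rho_xinv, opXinv_pow_single, rho_of,
    opR_single, mul_one]

end Model
section Zc
variable {R : Type u} [Ring R] (φ : R ≃+* R)

local notation "TL" => TwistedLaurent R φ
local notation "tx" => TwistedLaurent.x R φ
local notation "txinv" => TwistedLaurent.xinv R φ
local notation "tof" => TwistedLaurent.ofBase R φ

lemma nzd_phi {r : R} (h : ∀ t, t * r = 0 → t = 0) : ∀ t, t * φ r = 0 → t = 0 := by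
  intro t ht
  have : φ.symm t * r = 0 := by
    have := congrArg φ.symm ht
    rw [map_mul, RingEquiv.symm_apply_apply, map_zero] at this
    exact this
  have h0 : φ.symm t = 0 := h _ this
  have := congrArg φ h0
  rwa [RingEquiv.apply_symm_apply, map_zero] at this

lemma txinvpow_mul_tof (n : ℕ) : ∀ r : R,
    ∃ s, txinv ^ n * tof r = tof s * txinv ^ n ∧
      ((∀ t, t * r = 0 → t = 0) → (∀ t, t * s = 0 → t = 0)) := by
  induction n with
  | zero => exact fun r => ⟨r, by simp, fun h => h⟩
  | succ n ih =>
    intro r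
    obtain ⟨s, hs, hnzd⟩ := ih (φ r)
    refine ⟨s, ?_, fun h => hnzd (nzd_phi φ h)⟩
    calc txinv ^ (n+1) * tof r = txinv ^ n * (txinv * tof r) := by
          rw [pow_succ]; simp [mul_assoc]
      _ = txinv ^ n * tof (φ r) * txinv := by rw [txinv_mul_tof, ← mul_assoc]
      _ = tof s * txinv ^ (n+1) := by rw [hs, pow_succ]; simp [mul_assoc]

lemma zc_rep (z : R) (hznz : ∀ r : R, r * z = 0 → r = 0) (n : ℕ) :
    ∃ c : R, (tof z * txinv) ^ n = tof c * txinv ^ n ∧ ∀ r : R, r * c = 0 → r = 0 := by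
  induction n with
  | zero => exact ⟨1, by simp, fun r hr => by simpa using hr⟩
  | succ n ih =>
    obtain ⟨c, hc, hcn⟩ := ih
    obtain ⟨s, hs, hsn⟩ := txinvpow_mul_tof φ n z
    refine ⟨c * s, ?_, fun r hr => ?_⟩
    · calc (tof z * txinv) ^ (n+1) = (tof z * txinv) ^ n * (tof z * txinv) := by rw [pow_succ]
        _ = tof c * (txinv ^ n * tof z) * txinv := by rw [hc]; simp [mul_assoc]
        _ = tof c * tof s * txinv ^ n * txinv := by rw [hs]; simp [mul_assoc]
        _ = tof (c * s) * txinv ^ (n+1) := by rw [map_mul, pow_succ]; simp [mul_assoc]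
    · exact hcn r (hsn hznz _ (by rwa [← mul_assoc] at hr))

end Zc
section Span
variable {R : Type u} [Ring R] (φ : R ≃+* R) (z : R)

local notation "gX" => GWA.X R φ z
local notation "gY" => GWA.Y R φ z
local notation "gof" => GWA.ofBase R φ z

/-- A monomial `r · gpow k` in the GWA. -/
noncomputable def mono (k : ℤ) (r : R) : GWA R φ z := gof r * gpow φ z k

lemma mono_zero (k : ℤ) : mono φ z k 0 = 0 := by simp [mono]

lemma mono_add (k : ℤ) (r s : R) :
    mono φ z k (r + s) = mono φ z k r + mono φ z k s := by
  simp [mono, map_add, add_mul]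

/-- The set of elements expressible in normal form. -/
def Spanned : Set (GWA R φ z) :=
  {v | ∃ f : ℤ →₀ R, v = f.sum fun k r => mono φ z k r}

lemma spanned_zero : (0 : GWA R φ z) ∈ Spanned φ z := ⟨0, by simp⟩

lemma spanned_mono (k : ℤ) (r : R) : mono φ z k r ∈ Spanned φ z :=
  ⟨Finsupp.single k r, by rw [Finsupp.sum_single_index (mono_zero φ z k)]⟩

lemma spanned_one : (1 : GWA R φ z) ∈ Spanned φ z := by
  have := spanned_mono φ z 0 1
  simpa [mono, gpow_zero] using this

lemma spanned_add {v w : GWA R φ z} (hv : v ∈ Spanned φ z) (hw : w ∈ Spanned φ z) :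
    v + w ∈ Spanned φ z := by
  obtain ⟨f, rfl⟩ := hv
  obtain ⟨g, rfl⟩ := hw
  exact ⟨f + g, (Finsupp.sum_add_index' (mono_zero φ z) (mono_add φ z)).symm⟩

lemma spanned_neg {v : GWA R φ z} (hv : v ∈ Spanned φ z) : -v ∈ Spanned φ z := by
  obtain ⟨f, rfl⟩ := hv
  refine ⟨-f, ?_⟩
  have h0 : ((-f) + f).sum (fun k r => mono φ z k r) = 0 := by
    rw [neg_add_cancel]; simp
  rw [Finsupp.sum_add_index' (mono_zero φ z) (mono_add φ z)] at h0
  exact (eq_neg_of_add_eq_zero_left h0).symm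

lemma spanned_finsum {ι : Type*} (s : Finset ι) (g : ι → GWA R φ z)
    (h : ∀ i ∈ s, g i ∈ Spanned φ z) : (∑ i ∈ s, g i) ∈ Spanned φ z := by
  classical
  induction s using Finset.induction with
  | empty => simpa using spanned_zero φ z
  | insert a s hni ih =>
    rw [Finset.sum_insert hni]
    exact spanned_add φ z (h a (Finset.mem_insert_self a s))
      (ih fun i hi => h i (Finset.mem_insert_of_mem hi))

lemma mono_mul_mono (k l : ℤ) (r s : R) :
    ∃ t, mono φ z k r * mono φ z l s = mono φ z (k + l) t := by
  obtain ⟨u, hu⟩ := gpow_mul_gof φ z k s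
  obtain ⟨t, ht⟩ := gpow_mul_gpow φ z k l
  refine ⟨r * u * t, ?_⟩
  calc mono φ z k r * mono φ z l s
      = gof r * (gpow φ z k * gof s) * gpow φ z l := by simp [mono, mul_assoc]
    _ = gof (r * u) * (gpow φ z k * gpow φ z l) := by rw [hu, map_mul]; simp [mul_assoc]
    _ = gof (r * u) * (gof t * gpow φ z (k + l)) := by rw [ht]
    _ = mono φ z (k + l) (r * u * t) := by simp [mono, map_mul, mul_assoc]

lemma spanned_mul {v w : GWA R φ z} (hv : v ∈ Spanned φ z) (hw : w ∈ Spanned φ z) :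
    v * w ∈ Spanned φ z := by
  obtain ⟨f, rfl⟩ := hv
  obtain ⟨g, rfl⟩ := hw
  rw [Finsupp.sum_mul]
  refine spanned_finsum φ z _ _ fun k hk => ?_
  show mono φ z k (f k) * (g.sum fun l s => mono φ z l s) ∈ Spanned φ z
  rw [Finsupp.mul_sum]
  refine spanned_finsum φ z _ _ fun l hl => ?_
  show mono φ z k (f k) * mono φ z l (g l) ∈ Spanned φ z
  obtain ⟨t, ht⟩ := mono_mul_mono φ z k l (f k) (g l)
  rw [ht]
  exact spanned_mono φ z _ _

lemma spanned_all (v : GWA R φ z) : v ∈ Spanned φ z := by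
  obtain ⟨a, rfl⟩ := RingQuot.mkRingHom_surjective (GWARel R φ z) v
  induction a using FreeAlgebra.induction with
  | grade0 k =>
    have h1 : RingQuot.mkRingHom (GWARel R φ z) (algebraMap ℤ _ k) = gof ((k : R)) := by
      rw [map_intCast, eq_intCast (algebraMap ℤ (FreeAlgebra ℤ (R ⊕ Fin 2))) k]
      simp [map_intCast]
    rw [h1]
    simpa [mono, gpow_zero] using spanned_mono φ z 0 ((k : R))
  | grade1 s =>
    match s with
    | Sum.inl r =>
      have : RingQuot.mkRingHom (GWARel R φ z) (FreeAlgebra.ι ℤ (Sum.inl r)) = gof r := rfl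
      rw [this]
      simpa [mono, gpow_zero] using spanned_mono φ z 0 r
    | Sum.inr 0 =>
      have h1 : RingQuot.mkRingHom (GWARel R φ z) (FreeAlgebra.ι ℤ (Sum.inr 0)) = gX := rfl
      have h2 : mono φ z 1 1 = gX := by
        simp [mono, gpow_nonneg φ z (by norm_num : (0:ℤ) ≤ 1)]
      rw [h1, ← h2]
      exact spanned_mono φ z 1 1
    | Sum.inr 1 =>
      have h1 : RingQuot.mkRingHom (GWARel R φ z) (FreeAlgebra.ι ℤ (Sum.inr 1)) = gY := rfl
      have h2 : mono φ z (-1) 1 = gY := by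
        simp [mono, gpow_neg φ z (by norm_num : (-1:ℤ) < 0)]
      rw [h1, ← h2]
      exact spanned_mono φ z (-1) 1
  | mul a b ha hb => rw [map_mul]; exact spanned_mul φ z ha hb
  | add a b ha hb => rw [map_add]; exact spanned_add φ z ha hb

end Span
section Inj
variable {R : Type u} [Ring R] (φ : R ≃+* R) (z : R) (hzc : ∀ r : R, z * r = r * z)

local notation "TL" => TwistedLaurent R φ
local notation "tx" => TwistedLaurent.x R φ
local notation "txinv" => TwistedLaurent.xinv R φ
local notation "tof" => TwistedLaurent.ofBase R φ

/-- `coeff` as an additive monoid hom. -/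
noncomputable def coeffHom : TL →+ (ℤ →₀ R) where
  toFun := coeff φ
  map_zero' := coeff_zero φ
  map_add' := coeff_add φ

lemma coeffHom_apply (w : TL) : coeffHom φ w = coeff φ w := rfl

lemma coeff_theta_mono (hznz1 : ∀ r : R, r * z = 0 → r = 0) (k : ℤ) (r : R) :
    ∃ t, coeff φ (theta φ z hzc (mono φ z k r)) = Finsupp.single k t ∧ (t = 0 → r = 0) := by
  by_cases hk : 0 ≤ k
  · refine ⟨r, ?_, fun h => h⟩
    rw [mono, map_mul, theta_of, gpow_nonneg φ z hk, map_pow, theta_X, coeff_mono_pos,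
      Int.toNat_of_nonneg hk]
  · obtain ⟨c, hc, hcn⟩ := zc_rep φ z hznz1 (-k).toNat
    refine ⟨r * c, ?_, fun h => hcn r h⟩
    rw [mono, map_mul, theta_of, gpow_neg φ z (by omega), map_pow, theta_Y, hc, ← mul_assoc,
      ← map_mul, coeff_mono_neg]
    congr 1
    omega

lemma theta_injective (hznz1 : ∀ r : R, r * z = 0 → r = 0) :
    Function.Injective (theta φ z hzc) := by
  rw [injective_iff_map_eq_zero]
  intro v hv
  obtain ⟨f, rfl⟩ := spanned_all φ z v
  suffices hf : f = 0 by rw [hf]; simp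
  ext m
  have h1 : coeffHom φ (theta φ z hzc (f.sum fun k r => mono φ z k r)) = 0 := by
    rw [hv, map_zero]
  rw [map_finsuppSum, map_finsuppSum] at h1
  have h2 := congrArg (fun g : ℤ →₀ R => g m) h1
  simp only [Finsupp.coe_zero, Pi.zero_apply] at h2
  rw [Finsupp.sum_apply] at h2
  have h3 : (f.sum fun k r => coeffHom φ (theta φ z hzc (mono φ z k r)) m) =
      coeffHom φ (theta φ z hzc (mono φ z m (f m))) m := by
    rw [Finsupp.sum]
    refine Finset.sum_eq_single m (fun k hk hkm => ?_) (fun hm => ?_)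
    · obtain ⟨t, ht, -⟩ := coeff_theta_mono φ z hzc hznz1 k (f k)
      rw [coeffHom_apply, ht, Finsupp.single_apply, if_neg hkm]
    · rw [Finsupp.notMem_support_iff.mp hm, mono_zero, map_zero, map_zero]
      rfl
  rw [h3] at h2
  obtain ⟨t, ht, hto⟩ := coeff_theta_mono φ z hzc hznz1 m (f m)
  rw [coeffHom_apply, ht, Finsupp.single_apply, if_pos rfl] at h2
  simpa using hto h2

end Inj
section Range
variable {R : Type u} [Ring R] (φ : R ≃+* R) (z : R) (hzc : ∀ r : R, z * r = r * z)

local notation "TL" => TwistedLaurent R φ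
local notation "tx" => TwistedLaurent.x R φ
local notation "txinv" => TwistedLaurent.xinv R φ
local notation "tof" => TwistedLaurent.ofBase R φ
local notation "gX" => GWA.X R φ z
local notation "gY" => GWA.Y R φ z
local notation "gof" => GWA.ofBase R φ z

lemma theta_range :
    (theta φ z hzc).range = Subring.closure
      (Set.range tof ∪ {tx, tof z * txinv}) := by
  apply le_antisymm
  · rintro w ⟨v, rfl⟩
    obtain ⟨a, rfl⟩ := RingQuot.mkRingHom_surjective (GWARel R φ z) v
    induction a using FreeAlgebra.induction with
    | grade0 k =>
      have h1 : RingQuot.mkRingHom (GWARel R φ z) (algebraMap ℤ _ k) = ((k : GWA R φ z)) := by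
        rw [eq_intCast (algebraMap ℤ (FreeAlgebra ℤ (R ⊕ Fin 2))) k]; simp [map_intCast]
      rw [h1, map_intCast]
      exact intCast_mem _ k
    | grade1 s =>
      match s with
      | Sum.inl r =>
        have h1 : theta φ z hzc (RingQuot.mkRingHom (GWARel R φ z)
            (FreeAlgebra.ι ℤ (Sum.inl r))) = tof r := theta_of φ z hzc r
        rw [h1]
        exact Subring.subset_closure (Or.inl ⟨r, rfl⟩)
      | Sum.inr 0 =>
        have h1 : theta φ z hzc (RingQuot.mkRingHom (GWARel R φ z)
            (FreeAlgebra.ι ℤ (Sum.inr 0))) = tx := theta_X φ z hzc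
        rw [h1]
        exact Subring.subset_closure (Or.inr (by simp))
      | Sum.inr 1 =>
        have h1 : theta φ z hzc (RingQuot.mkRingHom (GWARel R φ z)
            (FreeAlgebra.ι ℤ (Sum.inr 1))) = tof z * txinv := theta_Y φ z hzc
        rw [h1]
        exact Subring.subset_closure (Or.inr (by simp))
    | mul a b ha hb => rw [map_mul, map_mul]; exact mul_mem ha hb
    | add a b ha hb => rw [map_add, map_add]; exact add_mem ha hb
  · rw [Subring.closure_le]
    rintro w (⟨r, rfl⟩ | hw)
    · exact ⟨gof r, theta_of φ z hzc r⟩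
    · rcases hw with h | h
      · exact ⟨gX, by rw [h]; exact theta_X φ z hzc⟩
      · simp only [Set.mem_singleton_iff] at h
        exact ⟨gY, by rw [h]; exact theta_Y φ z hzc⟩

end Range
section Form
variable {R : Type u} [Ring R] (φ : R ≃+* R) (z : R) (hzc : ∀ r : R, z * r = r * z)

local notation "TL" => TwistedLaurent R φ
local notation "tx" => TwistedLaurent.x R φ
local notation "txinv" => TwistedLaurent.xinv R φ
local notation "tof" => TwistedLaurent.ofBase R φ
local notation "gX" => GWA.X R φ z
local notation "gY" => GWA.Y R φ z
local notation "gof" => GWA.ofBase R φ z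

lemma theta_pad (v : GWA R φ z) (k n : ℕ) :
    theta φ z hzc (v * gX ^ k) * txinv ^ (k + n) = theta φ z hzc v * txinv ^ n := by
  rw [map_mul, map_pow, theta_X, mul_assoc, txpow_mul_txinvpow]

lemma theta_pad' (v : GWA R φ z) (m n : ℕ) (h : n ≤ m) :
    theta φ z hzc (v * gX ^ (m - n)) * txinv ^ m = theta φ z hzc v * txinv ^ n := by
  have := theta_pad φ z hzc v (m - n) n
  rwa [show m - n + n = m by omega] at this

lemma txinvpow_mul_theta (a : FreeAlgebra ℤ (R ⊕ Fin 2)) : ∀ n : ℕ,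
    ∃ (u : GWA R φ z) (m : ℕ),
      txinv ^ n * theta φ z hzc (RingQuot.mkRingHom (GWARel R φ z) a) =
        theta φ z hzc u * txinv ^ m := by
  induction a using FreeAlgebra.induction with
  | grade0 k =>
    intro n
    refine ⟨(k : GWA R φ z), n, ?_⟩
    have h1 : RingQuot.mkRingHom (GWARel R φ z) (algebraMap ℤ _ k) = ((k : GWA R φ z)) := by
      rw [eq_intCast (algebraMap ℤ (FreeAlgebra ℤ (R ⊕ Fin 2))) k]; simp [map_intCast]
    rw [h1, map_intCast]
    exact ((Int.cast_commute k (txinv ^ n)).eq).symm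
  | grade1 s =>
    match s with
    | Sum.inl r =>
      intro n
      obtain ⟨s, hs, -⟩ := txinvpow_mul_tof φ n r
      refine ⟨gof s, n, ?_⟩
      have h1 : RingQuot.mkRingHom (GWARel R φ z) (FreeAlgebra.ι ℤ (Sum.inl r)) = gof r := rfl
      rw [h1, theta_of, theta_of]
      exact hs
    | Sum.inr 0 =>
      intro n
      have h1 : RingQuot.mkRingHom (GWARel R φ z) (FreeAlgebra.ι ℤ (Sum.inr 0)) = gX := rfl
      match n with
      | 0 => exact ⟨gX, 0, by rw [h1]; simp⟩
      | Nat.succ k =>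
        refine ⟨1, k, ?_⟩
        rw [h1, theta_X, map_one, one_mul, pow_succ, mul_assoc, txinv_mul_tx, mul_one]
    | Sum.inr 1 =>
      intro n
      obtain ⟨s, hs, -⟩ := txinvpow_mul_tof φ n z
      refine ⟨gof s * gX, n + 2, ?_⟩
      have h1 : RingQuot.mkRingHom (GWARel R φ z) (FreeAlgebra.ι ℤ (Sum.inr 1)) = gY := rfl
      have h2 : tx * txinv ^ (n + 2) = txinv ^ (n + 1) := by
        have := txpow_mul_txinvpow (R := R) (φ := φ) 1 (n + 1)
        rwa [pow_one, show 1 + (n + 1) = n + 2 by omega] at this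
      rw [h1, theta_Y, map_mul, theta_of, theta_X, mul_assoc, h2, ← mul_assoc, hs,
        mul_assoc, ← pow_succ]
  | mul a b ha hb =>
    intro n
    obtain ⟨u, m, hu⟩ := ha n
    obtain ⟨u', m', hu'⟩ := hb m
    refine ⟨u * u', m', ?_⟩
    rw [map_mul, map_mul, map_mul, ← mul_assoc, hu, mul_assoc, hu', ← mul_assoc]
  | add a b ha hb =>
    intro n
    obtain ⟨u1, m1, h1⟩ := ha n
    obtain ⟨u2, m2, h2⟩ := hb n
    refine ⟨u1 * gX ^ (max m1 m2 - m1) + u2 * gX ^ (max m1 m2 - m2), max m1 m2, ?_⟩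
    rw [map_add, map_add, mul_add, h1, h2, map_add, add_mul,
      theta_pad' φ z hzc u1 (max m1 m2) m1 (le_max_left _ _),
      theta_pad' φ z hzc u2 (max m1 m2) m2 (le_max_right _ _)]

lemma txinvpow_mul_theta' (v : GWA R φ z) (n : ℕ) :
    ∃ (u : GWA R φ z) (m : ℕ),
      txinv ^ n * theta φ z hzc v = theta φ z hzc u * txinv ^ m := by
  obtain ⟨a, rfl⟩ := RingQuot.mkRingHom_surjective (GWARel R φ z) v
  exact txinvpow_mul_theta φ z hzc a n

lemma laurent_form (w : TL) :
    ∃ (n : ℕ) (v : GWA R φ z), w = theta φ z hzc v * txinv ^ n := by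
  obtain ⟨a, rfl⟩ := RingQuot.mkRingHom_surjective (LaurentRel R φ) w
  induction a using FreeAlgebra.induction with
  | grade0 k =>
    refine ⟨0, (k : GWA R φ z), ?_⟩
    have h1 : RingQuot.mkRingHom (LaurentRel R φ) (algebraMap ℤ _ k) = ((k : TL)) := by
      rw [eq_intCast (algebraMap ℤ (FreeAlgebra ℤ (R ⊕ Bool))) k]; simp [map_intCast]
    rw [h1, map_intCast, pow_zero, mul_one]
  | grade1 s =>
    match s with
    | Sum.inl r =>
      exact ⟨0, gof r, by rw [theta_of, pow_zero, mul_one]; rfl⟩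
    | Sum.inr true =>
      exact ⟨0, gX, by rw [theta_X, pow_zero, mul_one]; rfl⟩
    | Sum.inr false =>
      exact ⟨1, 1, by rw [map_one, one_mul, pow_one]; rfl⟩
  | mul a b ha hb =>
    obtain ⟨n1, v1, h1⟩ := ha
    obtain ⟨n2, v2, h2⟩ := hb
    obtain ⟨u, m, hu⟩ := txinvpow_mul_theta' φ z hzc v2 n1
    refine ⟨m + n2, v1 * u, ?_⟩
    rw [map_mul, h1, h2, map_mul, pow_add]
    calc theta φ z hzc v1 * txinv ^ n1 * (theta φ z hzc v2 * txinv ^ n2)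
        = theta φ z hzc v1 * (txinv ^ n1 * theta φ z hzc v2) * txinv ^ n2 := by
          simp [mul_assoc]
      _ = theta φ z hzc v1 * (theta φ z hzc u * txinv ^ m) * txinv ^ n2 := by rw [hu]
      _ = theta φ z hzc v1 * theta φ z hzc u * (txinv ^ m * txinv ^ n2) := by
          simp [mul_assoc]
  | add a b ha hb =>
    obtain ⟨n1, v1, h1⟩ := ha
    obtain ⟨n2, v2, h2⟩ := hb
    refine ⟨max n1 n2, v1 * gX ^ (max n1 n2 - n1) + v2 * gX ^ (max n1 n2 - n2), ?_⟩
    rw [map_add, h1, h2, map_add, add_mul,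
      theta_pad' φ z hzc v1 (max n1 n2) n1 (le_max_left _ _),
      theta_pad' φ z hzc v2 (max n1 n2) n2 (le_max_right _ _)]

end Form
end Statement5Aux

/-- Let `H(R, φ, z)` be a generalized Weyl algebra with `z` a central
non-zero-divisor.  Then there is an injective ring homomorphism
`θ : H(R, φ, z) → R_φ[x, x⁻¹]` to the `φ`-twisted Laurent polynomial ring which is the
identity on `R` and sends `x ↦ x`, `y ↦ z·x⁻¹`; its image is the subring generated by `R`,
`x` and `z·x⁻¹`, and every element of `R_φ[x, x⁻¹]` has the form `h·x^{−n}` with `h` in the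
image and `n ≥ 0`. -/
theorem statement5 (hz : z ∈ Set.center R)
    (hznzd : (∀ r : R, r * z = 0 → r = 0) ∧ (∀ r : R, z * r = 0 → r = 0)) :
    ∃ θ : GWA R φ z →+* TwistedLaurent R φ,
      (∀ r : R, θ (GWA.ofBase R φ z r) = TwistedLaurent.ofBase R φ r) ∧
      θ (GWA.X R φ z) = TwistedLaurent.x R φ ∧
      θ (GWA.Y R φ z) = TwistedLaurent.ofBase R φ z * TwistedLaurent.xinv R φ ∧
      Function.Injective θ ∧
      θ.range = Subring.closure
        (Set.range (TwistedLaurent.ofBase R φ) ∪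
          {TwistedLaurent.x R φ, TwistedLaurent.ofBase R φ z * TwistedLaurent.xinv R φ}) ∧
      ∀ w : TwistedLaurent R φ, ∃ (n : ℕ) (v : GWA R φ z),
        w = θ v * (TwistedLaurent.xinv R φ) ^ n := by
  have hzc : ∀ r : R, z * r = r * z := fun r => hz.comm r
  refine ⟨Statement5Aux.theta φ z hzc, fun r => Statement5Aux.theta_of φ z hzc r,
    Statement5Aux.theta_X φ z hzc, Statement5Aux.theta_Y φ z hzc,
    Statement5Aux.theta_injective φ z hzc hznzd.1, Statement5Aux.theta_range φ z hzc,
    fun w => Statement5Aux.laurent_form φ z hzc w⟩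
end

section
/- With notation as in the standing completion setup: for all 0 ≤ n < l and all 0 ≤ i < l with i ≠ n, the element φ̂ⁿ(e)·φ̂ⁱ(z) is a unit of the corner ring φ̂ⁿ(e)·R̂ (a ring with identity element φ̂ⁿ(e)). In particular, there exists a unit u of the ring e·R̂ such that e·z = e·τ·u. -/
universe u


namespace Statement8Aux

variable {R : Type u} [CommRing R]

lemma pow_apply_add (φ : R ≃+* R) (a c : ℕ) (x : R) :
    (φ ^ (a + c)) x = (φ ^ a) ((φ ^ c) x) := by
  rw [pow_add]; rfl

lemma pow_succ_apply (φ : R ≃+* R) (k : ℕ) (x : R) :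
    (φ ^ (k + 1)) x = φ ((φ ^ k) x) := by
  rw [pow_succ']; rfl

lemma pow_zero_apply (φ : R ≃+* R) (x : R) : (φ ^ 0) x = x := by
  rw [pow_zero]; rfl

lemma transitionMap_mk (I : Ideal R) (M : Type*) [AddCommGroup M] [Module R M] {m n : ℕ}
    (hmn : m ≤ n) (x : M) :
    AdicCompletion.transitionMap I M hmn (Submodule.Quotient.mk x) = Submodule.Quotient.mk x :=
  rfl

/-- An element of an adic completion whose image in `R/I` is invertible (witnessed by a
`y` with `x*y ≡ 1`) is a unit. -/
lemma isUnit_of_val_one (I : Ideal R) (x : AdicCompletion I R)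
    (h : ∃ y : AdicCompletion I R, (x * y).val 1 = 1) : IsUnit x := by
  obtain ⟨y, hy⟩ := h
  suffices hxy : IsUnit (x * y) from isUnit_of_mul_isUnit_left hxy
  set u := x * y with hu
  have hunit : ∀ n, IsUnit (u.val n) := by
    intro n
    match n with
    | 0 =>
      have h0 : u.val 0 = 1 := by
        have hp := u.property (Nat.zero_le 1)
        rw [hy] at hp
        rw [← hp]
        rfl
      rw [h0]; exact isUnit_one
    | (m+1) =>
      obtain ⟨a, ha⟩ := Submodule.Quotient.mk_surjective _ (u.val (m+1))
      have h1 : (Submodule.Quotient.mk a : R ⧸ ((I ^ 1 • ⊤ : Submodule R R))) = 1 := by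
        rw [← Statement8Aux.transitionMap_mk I R (show 1 ≤ m+1 by omega), ha,
          u.property (show 1 ≤ m+1 by omega), hy]
      have hmem : a - 1 ∈ (I ^ 1 • ⊤ : Submodule R R) := by
        rw [show (1 : R ⧸ ((I ^ 1 • ⊤ : Submodule R R))) = Submodule.Quotient.mk 1 from rfl] at h1
        exact (Submodule.Quotient.eq _).mp h1
      have hmem' : a - 1 ∈ I := by
        have hms : ((I ^ 1 • ⊤ : Submodule R R)) = (I ^ 1 : Ideal R) := by ext t; simp
        rw [hms, pow_one] at hmem; exact hmem
      have hnil : IsNilpotent (Submodule.Quotient.mk (a - 1) :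
          R ⧸ ((I ^ (m+1) • ⊤ : Submodule R R))) := by
        refine ⟨m + 1, ?_⟩
        have hpow : (a - 1) ^ (m+1) ∈ (I ^ (m+1) • ⊤ : Submodule R R) := by
          have hms : ((I ^ (m+1) • ⊤ : Submodule R R)) = (I ^ (m+1) : Ideal R) := by ext t; simp
          rw [hms]; exact Ideal.pow_mem_pow hmem' (m+1)
        show (Ideal.Quotient.mk ((I ^ (m+1) • ⊤ : Ideal R)) (a - 1)) ^ (m+1) = 0
        rw [← map_pow, Ideal.Quotient.eq_zero_iff_mem]
        exact hpow
      have : u.val (m+1) = Submodule.Quotient.mk (a - 1) + 1 := by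
        rw [← ha, show (1 : R ⧸ ((I ^ (m+1) • ⊤ : Submodule R R))) = Submodule.Quotient.mk 1
          from rfl]
        rw [show (Submodule.Quotient.mk (a-1) + Submodule.Quotient.mk 1 :
          R ⧸ ((I ^ (m+1) • ⊤ : Submodule R R))) = Submodule.Quotient.mk (a - 1 + 1) from rfl]
        rw [sub_add_cancel]
      rw [this]
      exact hnil.isUnit_add_one
  let v : ∀ n, R ⧸ (I ^ n • ⊤ : Submodule R R) := fun n => ↑(hunit n).unit⁻¹
  have hv : ∀ {m n : ℕ} (hmn : m ≤ n), AdicCompletion.transitionMap I R hmn (v n) = v m := by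
    intro m n hmn
    have h1 : u.val m * AdicCompletion.transitionMap I R hmn (v n) = 1 := by
      rw [← u.property hmn, ← AdicCompletion.transitionMap_map_mul,
        (hunit n).mul_val_inv, AdicCompletion.transitionMap_map_one]
    symm
    calc v m = v m * (u.val m * AdicCompletion.transitionMap I R hmn (v n)) := by
            rw [h1, mul_one]
      _ = (v m * u.val m) * AdicCompletion.transitionMap I R hmn (v n) := by ring
      _ = AdicCompletion.transitionMap I R hmn (v n) := by
            rw [show v m * u.val m = 1 from (hunit m).val_inv_mul, one_mul]
  refine IsUnit.of_mul_eq_one (a := u) ⟨v, hv⟩ ?_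
  apply AdicCompletion.ext
  intro n
  show u.val n * v n = 1
  exact (hunit n).mul_val_inv

lemma exists_span (τ x : R)
    (h : ∀ P : Ideal R, P.IsMaximal → τ ∈ P → x ∈ P → False) :
    ∃ s : R, x * s - 1 ∈ Ideal.span {τ} := by
  have htop : Ideal.span {τ} ⊔ Ideal.span {x} = ⊤ := by
    by_contra hne
    obtain ⟨P, hP, hle⟩ := Ideal.exists_le_maximal _ hne
    exact h P hP (hle (Ideal.mem_sup_left (Ideal.subset_span rfl)))
      (hle (Ideal.mem_sup_right (Ideal.subset_span rfl)))
  have h1 : (1 : R) ∈ Ideal.span {τ} ⊔ Ideal.span {x} := htop ▸ Submodule.mem_top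
  obtain ⟨a, ha, c, hc, hac⟩ := Submodule.mem_sup.mp h1
  obtain ⟨s, hs⟩ := Ideal.mem_span_singleton'.mp hc
  refine ⟨s, ?_⟩
  have : x * s - 1 = -a := by rw [← hac, ← hs]; ring
  rw [this]
  exact Submodule.neg_mem _ ha

lemma cop_pair (φ : R ≃+* R) (z : R) (l : ℕ)
    (hcop : ∀ i : ℕ, 1 ≤ i → i ≤ l - 1 → Ideal.span {z, (φ ^ i) z} = ⊤)
    (a c : ℕ) (hac : a < c) (hcl : c - a ≤ l - 1) :
    Ideal.span {(φ ^ a) z, (φ ^ c) z} = ⊤ := by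
  have h := congrArg (Ideal.map ((φ ^ a : R ≃+* R) : R →+* R))
    (hcop (c - a) (by omega) hcl)
  rw [Ideal.map_span, Ideal.map_top, Set.image_insert_eq, Set.image_singleton] at h
  have hcomp : ((φ ^ a : R ≃+* R) : R →+* R) ((φ ^ (c - a)) z) = (φ ^ c) z := by
    show (φ ^ a) ((φ ^ (c - a)) z) = (φ ^ c) z
    rw [← pow_apply_add, show a + (c - a) = c by omega]
  have hz : ((φ ^ a : R ≃+* R) : R →+* R) z = (φ ^ a) z := rfl
  rw [hcomp, hz] at h
  exact h

/-- Key maximal-ideal avoidance lemma. -/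
lemma key (φ : R ≃+* R) (z b : R) (l : ℕ)
    (hb : IsNilpotent b)
    (hφl : ∃ r0 : R, (φ ^ l) z - z = b * r0)
    (hcop : ∀ i : ℕ, 1 ≤ i → i ≤ l - 1 → Ideal.span {z, (φ ^ i) z} = ⊤)
    (r : R) (hr1 : r - 1 ∈ Ideal.span {z})
    (hr2 : ∀ i : ℕ, 1 ≤ i → i ≤ l - 1 → r ∈ Ideal.span {(φ ^ i) z})
    (n : ℕ) (hn : n < l)
    (s : R) (hs : s - (φ ^ n) r ∈ Ideal.span {∏ i ∈ Finset.range l, (φ ^ i) z} ⊔ nilradical R)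
    (g : R) (hg : ∀ P : Ideal R, P.IsMaximal → (φ ^ n) z ∈ P → g ∈ P → False) :
    ∀ P : Ideal R, P.IsMaximal → (∏ i ∈ Finset.range l, (φ ^ i) z) ∈ P →
      s * g + 1 - s ∈ P → False := by
  intro P hP hτ hx
  haveI hprime : P.IsPrime := hP.isPrime
  have hNP : nilradical R ≤ P := nilradical_le_prime P
  have hsP : s - (φ ^ n) r ∈ P := by
    refine (sup_le ?_ hNP : Ideal.span {∏ i ∈ Finset.range l, (φ ^ i) z} ⊔ nilradical R ≤ P) hs
    rw [Ideal.span_le, Set.singleton_subset_iff]; exact hτ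
  obtain ⟨m, hm, hmP⟩ : ∃ m ∈ Finset.range l, (φ ^ m) z ∈ P :=
    Ideal.IsPrime.prod_mem_iff.mp hτ
  rw [Finset.mem_range] at hm
  by_cases hmn : m = n
  · subst hmn
    have h1 : (φ ^ m) r - 1 ∈ P := by
      obtain ⟨c, hc⟩ := Ideal.mem_span_singleton'.mp hr1
      have hmem : (φ ^ m) (r - 1) ∈ P := by
        rw [← hc, map_mul]; exact P.mul_mem_left _ hmP
      have : (φ ^ m) (r - 1) = (φ ^ m) r - 1 := by rw [map_sub, map_one]
      rwa [this] at hmem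
    have hs1 : s - 1 ∈ P := by
      have h2 := P.add_mem hsP h1
      have : s - (φ ^ m) r + ((φ ^ m) r - 1) = s - 1 := by ring
      rwa [this] at h2
    have hgP : g ∈ P := by
      have h2 : (s - 1) * (g - 1) ∈ P := P.mul_mem_right _ hs1
      have h3 : g = (s * g + 1 - s) - (s - 1) * (g - 1) := by ring
      rw [h3]; exact P.sub_mem hx h2
    exact hg P hP hmP hgP
  · have hrP : (φ ^ n) r ∈ P := by
      rcases lt_or_gt_of_ne hmn with hlt | hgt
      · -- m < n, use k = m + l - n
        obtain ⟨c, hc⟩ := Ideal.mem_span_singleton'.mp (hr2 (m + l - n) (by omega) (by omega))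
        have h4 : (φ ^ n) r = (φ ^ n) c * (φ ^ (m + l)) z := by
          rw [← hc, map_mul, ← pow_apply_add, show n + (m + l - n) = m + l by omega]
        obtain ⟨r0, hr0⟩ := hφl
        have h5 : (φ ^ (m + l)) z ∈ P := by
          have h6 : (φ ^ (m + l)) z = (φ ^ m) z + (φ ^ m) (b * r0) := by
            rw [pow_apply_add, ← map_add]
            congr 1
            have := sub_eq_iff_eq_add.mp hr0
            rw [this]; ring
          have hnil : IsNilpotent ((φ ^ m) (b * r0)) := by
            obtain ⟨k, hk⟩ := hb
            exact ⟨k, by rw [← map_pow, show (b * r0) ^ k = b ^ k * r0 ^ k by ring, hk,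
              zero_mul, map_zero]⟩
          rw [h6]
          exact P.add_mem hmP (hNP (mem_nilradical.mpr hnil))
        rw [h4]; exact P.mul_mem_left _ h5
      · -- n < m, use k = m - n
        obtain ⟨c, hc⟩ := Ideal.mem_span_singleton'.mp (hr2 (m - n) (by omega) (by omega))
        have h4 : (φ ^ n) r = (φ ^ n) c * (φ ^ m) z := by
          rw [← hc, map_mul, ← pow_apply_add, show n + (m - n) = m by omega]
        rw [h4]; exact P.mul_mem_left _ hmP
    have hsP2 : s ∈ P := by
      have : s = (s - (φ ^ n) r) + (φ ^ n) r := by ring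
      rw [this]; exact P.add_mem hsP hrP
    have h1P : (1 : R) ∈ P := by
      have : (1 : R) = (s * g + 1 - s) - s * g + s := by ring
      rw [this]
      exact P.add_mem (P.sub_mem hx (P.mul_mem_right _ hsP2)) hsP2
    exact hP.ne_top ((Ideal.eq_top_iff_one P).mpr h1P)

end Statement8Aux

section CompletionSetup

variable (R : Type u) [CommRing R] (φ : R ≃+* R) (z : R) (l : ℕ)

/-- The element `τ = z·φ(z)·φ²(z)⋯φ^{l−1}(z)`. -/
noncomputable def gwaTau : R := ∏ i ∈ Finset.range l, (φ ^ i) z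

/-- The `(τ)`-adic completion `R̂` of `R`. -/
noncomputable abbrev RHat : Type u := AdicCompletion (Ideal.span {gwaTau R φ z l}) R

/-- The evaluation (projection) map `R̂ → R/(τⁿ)` from the `(τ)`-adic completion. -/
noncomputable def RHat.proj (n : ℕ) :
    RHat R φ z l →ₗ[R]
      R ⧸ ((Ideal.span {gwaTau R φ z l}) ^ n • ⊤ : Submodule R R) :=
  AdicCompletion.eval (Ideal.span {gwaTau R φ z l}) R n

end CompletionSetup

/-- (Standing completion setup as in the paper: `R` commutative, `φ` a ring
automorphism, `z` a non-zero-divisor, `b` nilpotent, `l ≥ 1`, `φ^l(z) − z ∈ bR`, and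
`(z, φ^i(z)) = R` for `1 ≤ i ≤ l−1`; `R̂` is the `(τ)`-adic completion of `R` where
`τ = z·φ(z)⋯φ^{l−1}(z)`; `φ̂` is the induced (continuous) automorphism of `R̂` extending `φ`;
`e ∈ R̂` is the idempotent lifting the CRT idempotent of `R/(τ)` corresponding to the
projection onto `R/(z)`.)

Then for `0 ≤ n < l` and `0 ≤ i < l` with `i ≠ n`, the element `φ̂ⁿ(e)·φ̂ⁱ(z)` is a unit of
the corner ring `φ̂ⁿ(e)·R̂` (whose identity element is `φ̂ⁿ(e)`).  In particular, there is a
unit `u` of `e·R̂` such that `e·z = (e·τ)·u`. -/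
theorem statement8 (R : Type u) [CommRing R] (φ : R ≃+* R) (z b : R) (l : ℕ)
    (hz : z ∈ nonZeroDivisors R) (hb : IsNilpotent b) (hl : 1 ≤ l)
    (hφl : ∃ r : R, (φ ^ l) z - z = b * r)
    (hcop : ∀ i : ℕ, 1 ≤ i → i ≤ l - 1 → Ideal.span {z, (φ ^ i) z} = ⊤)
    (φhat : RHat R φ z l ≃+* RHat R φ z l)
    (hφhat : ∀ r : R, φhat (algebraMap R (RHat R φ z l) r) = algebraMap R (RHat R φ z l) (φ r))
    (hφcont : ∀ n : ℕ, ∃ m : ℕ, ∀ x : RHat R φ z l,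
      RHat.proj R φ z l m x = 0 → RHat.proj R φ z l n (φhat x) = 0)
    (e : RHat R φ z l) (he : e * e = e)
    (heval : ∃ r : R, RHat.proj R φ z l 1 e = Submodule.Quotient.mk r ∧
      r - 1 ∈ Ideal.span {z} ∧
      ∀ i : ℕ, 1 ≤ i → i ≤ l - 1 → r ∈ Ideal.span {(φ ^ i) z}) :
    (∀ n i : ℕ, n < l → i < l → i ≠ n →
      ∃ w : RHat R φ z l, w * (φhat ^ n) e = w ∧
        ((φhat ^ n) e * (φhat ^ i) (algebraMap R (RHat R φ z l) z)) * w = (φhat ^ n) e) ∧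
    ∃ u v : RHat R φ z l, e * u = u ∧ u * v = e ∧
      e * algebraMap R (RHat R φ z l) z =
        e * algebraMap R (RHat R φ z l) (gwaTau R φ z l) * u := by
  clear hz
  obtain ⟨l', rfl⟩ : ∃ l', l = l' + 1 := ⟨l - 1, by omega⟩
  obtain ⟨r, hre, hr1, hr2⟩ := heval
  obtain ⟨r0, hr0⟩ := hφl
  have hgw : gwaTau R φ z (l' + 1) = ∏ i ∈ Finset.range (l' + 1), (φ ^ i) z := rfl
  set A : R := ∏ i ∈ Finset.range l', (φ ^ (i + 1)) z with hA
  have hτzA : gwaTau R φ z (l' + 1) = A * z := by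
    rw [hgw, Finset.prod_range_succ']
    congr 1
  have hre' : e.val 1 = Submodule.Quotient.mk r := hre
  have halg : ∀ (a : R) (k : ℕ), (algebraMap R (RHat R φ z (l' + 1)) a).val k
      = Submodule.Quotient.mk a := fun a k => rfl
  have hφτ : φ (gwaTau R φ z (l' + 1)) = gwaTau R φ z (l' + 1) + A * (b * r0) := by
    have h1 : φ (gwaTau R φ z (l' + 1)) = ∏ i ∈ Finset.range (l' + 1), (φ ^ (i + 1)) z := by
      rw [hgw, map_prod]
      exact Finset.prod_congr rfl fun i _ => (Statement8Aux.pow_succ_apply φ i z).symm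
    rw [h1, Finset.prod_range_succ, ← hA]
    have h2 : (φ ^ (l' + 1)) z = z + b * r0 := by
      rw [sub_eq_iff_eq_add.mp hr0]; ring
    rw [h2, hτzA]; ring
  have hms : ∀ a : R, a ∈ ((Ideal.span {gwaTau R φ z (l' + 1)} ^ 1 • ⊤ : Submodule R R)) ↔
      a ∈ Ideal.span {gwaTau R φ z (l' + 1)} := by
    intro a
    have h0 : ((Ideal.span {gwaTau R φ z (l' + 1)} ^ 1 • ⊤ : Submodule R R))
        = (Ideal.span {gwaTau R φ z (l' + 1)} ^ 1 : Ideal R) := by ext t; simp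
    rw [h0, pow_one]
  have hφJ : ∀ w : R, w ∈ Ideal.span {gwaTau R φ z (l' + 1)} ⊔ nilradical R →
      φ w ∈ Ideal.span {gwaTau R φ z (l' + 1)} ⊔ nilradical R := by
    intro w hw
    obtain ⟨p, hp, q, hq, rfl⟩ := Submodule.mem_sup.mp hw
    obtain ⟨c, hc⟩ := Ideal.mem_span_singleton'.mp hp
    rw [map_add]
    refine Submodule.add_mem _ ?_ (Submodule.mem_sup_right (mem_nilradical.mpr ?_))
    · rw [← hc, map_mul, hφτ, mul_add]
      refine Submodule.add_mem _
        (Submodule.mem_sup_left (Ideal.mem_span_singleton'.mpr ⟨φ c, rfl⟩))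
        (Submodule.mem_sup_right (mem_nilradical.mpr ?_))
      obtain ⟨k, hk⟩ := hb
      exact ⟨k, by
        rw [show (φ c * (A * (b * r0))) ^ k = (φ c * A * r0) ^ k * b ^ k by ring, hk, mul_zero]⟩
    · obtain ⟨k, hk⟩ := mem_nilradical.mp hq
      exact ⟨k, by rw [← map_pow, hk, map_zero]⟩
  have halgpow : ∀ (k : ℕ) (a : R),
      (φhat ^ k) (algebraMap R (RHat R φ z (l' + 1)) a)
        = algebraMap R (RHat R φ z (l' + 1)) ((φ ^ k) a) := by
    intro k a
    induction k with
    | zero => rw [Statement8Aux.pow_zero_apply, Statement8Aux.pow_zero_apply]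
    | succ k ih =>
      rw [Statement8Aux.pow_succ_apply, ih, hφhat, Statement8Aux.pow_succ_apply]
  have hInd : ∀ k : ℕ, ∃ s : R, ((φhat ^ k) e).val 1 = Submodule.Quotient.mk s ∧
      s - (φ ^ k) r ∈ Ideal.span {gwaTau R φ z (l' + 1)} ⊔ nilradical R := by
    intro k
    induction k with
    | zero =>
      refine ⟨r, ?_, ?_⟩
      · rw [Statement8Aux.pow_zero_apply]; exact hre'
      · rw [Statement8Aux.pow_zero_apply]
        simpa using Submodule.zero_mem
          (Ideal.span {gwaTau R φ z (l' + 1)} ⊔ nilradical R)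
    | succ k ih =>
      obtain ⟨s, hs1, hs2⟩ := ih
      obtain ⟨m, hm⟩ := hφcont 1
      obtain ⟨t, ht⟩ := Submodule.Quotient.mk_surjective _ (((φhat ^ k) e).val (max m 1))
      have hker : RHat.proj R φ z (l' + 1) m
          ((φhat ^ k) e - algebraMap R (RHat R φ z (l' + 1)) t) = 0 := by
        show (((φhat ^ k) e - algebraMap R (RHat R φ z (l' + 1)) t)).val m = 0
        rw [AdicCompletion.val_sub_apply, halg]
        have h0 : ((φhat ^ k) e).val m
            = AdicCompletion.transitionMap _ R (le_max_left m 1)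
              (((φhat ^ k) e).val (max m 1)) := (((φhat ^ k) e).property (le_max_left m 1)).symm
        rw [h0, ← ht, Statement8Aux.transitionMap_mk, sub_self]
      have h2 := hm _ hker
      have h3 : φhat ((φhat ^ k) e - algebraMap R (RHat R φ z (l' + 1)) t)
          = (φhat ^ (k + 1)) e - algebraMap R (RHat R φ z (l' + 1)) (φ t) := by
        rw [map_sub, hφhat, Statement8Aux.pow_succ_apply]
      refine ⟨φ t, ?_, ?_⟩
      · have h4 : ((φhat ^ (k + 1)) e - algebraMap R (RHat R φ z (l' + 1)) (φ t)).val 1 = 0 := by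
          rw [← h3]; exact h2
        rw [AdicCompletion.val_sub_apply, halg, sub_eq_zero] at h4
        exact h4
      · have h5 : t - s ∈ Ideal.span {gwaTau R φ z (l' + 1)} := by
          have h6 := congrArg (AdicCompletion.transitionMap _ R (le_max_right m 1)) ht
          rw [Statement8Aux.transitionMap_mk,
            ((φhat ^ k) e).property (le_max_right m 1), hs1] at h6
          exact (hms _).mp ((Submodule.Quotient.eq _).mp h6)
        have h8 : t - (φ ^ k) r ∈ Ideal.span {gwaTau R φ z (l' + 1)} ⊔ nilradical R := by
          have h7 : t - (φ ^ k) r = (t - s) + (s - (φ ^ k) r) := by ring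
          rw [h7]
          exact Submodule.add_mem _ (Submodule.mem_sup_left h5) hs2
        have h9 := hφJ _ h8
        rw [map_sub] at h9
        rw [Statement8Aux.pow_succ_apply]
        exact h9
  have main : ∀ (E G : RHat R φ z (l' + 1)) (sR gR : R), E * E = E →
      E.val 1 = Submodule.Quotient.mk sR → G.val 1 = Submodule.Quotient.mk gR →
      (∀ P : Ideal R, P.IsMaximal → gwaTau R φ z (l' + 1) ∈ P →
        sR * gR + 1 - sR ∈ P → False) →
      ∃ w : RHat R φ z (l' + 1), w * E = w ∧ (E * G) * w = E := by
    intro E G sR gR hE hEv hGv hPmax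
    obtain ⟨s', hs'⟩ := Statement8Aux.exists_span (gwaTau R φ z (l' + 1)) _ hPmax
    have hunit : IsUnit (E * G + 1 - E) := by
      apply Statement8Aux.isUnit_of_val_one (Ideal.span {gwaTau R φ z (l' + 1)})
      refine ⟨algebraMap R _ s', ?_⟩
      have hval : ((E * G + 1 - E) * algebraMap R (RHat R φ z (l' + 1)) s').val 1
          = Submodule.Quotient.mk ((sR * gR + 1 - sR) * s') := by
        rw [AdicCompletion.val_mul, AdicCompletion.val_sub_apply, AdicCompletion.val_add_apply,
          AdicCompletion.val_mul, hEv, hGv, halg, AdicCompletion.val_one]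
        rfl
      rw [hval, show (1 : R ⧸ ((Ideal.span {gwaTau R φ z (l' + 1)} ^ 1 • ⊤ : Submodule R R)))
        = Submodule.Quotient.mk 1 from rfl, Submodule.Quotient.eq]
      exact (hms _).mpr hs'
    obtain ⟨xi, hxi⟩ := hunit.exists_right_inv
    refine ⟨E * xi, ?_, ?_⟩
    · linear_combination xi * hE
    · linear_combination E * hxi + xi * hE
  constructor
  · intro n i hn hi hin
    obtain ⟨s, hs1, hs2⟩ := hInd n
    have hE : (φhat ^ n) e * (φhat ^ n) e = (φhat ^ n) e := by
      rw [← map_mul, he]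
    have hGv : ((φhat ^ i) (algebraMap R (RHat R φ z (l' + 1)) z)).val 1
        = Submodule.Quotient.mk ((φ ^ i) z) := by
      rw [halgpow]; exact halg _ 1
    have hgcase : ∀ P : Ideal R, P.IsMaximal → (φ ^ n) z ∈ P → (φ ^ i) z ∈ P → False := by
      intro P hP h1 h2
      rcases lt_or_gt_of_ne hin with hlt | hgt
      · have hsp := Statement8Aux.cop_pair φ z (l' + 1) hcop i n hlt (by omega)
        have hle : Ideal.span {(φ ^ i) z, (φ ^ n) z} ≤ P := by
          rw [Ideal.span_le, Set.insert_subset_iff, Set.singleton_subset_iff]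
          exact ⟨h2, h1⟩
        rw [hsp] at hle
        exact hP.ne_top (top_le_iff.mp hle)
      · have hsp := Statement8Aux.cop_pair φ z (l' + 1) hcop n i hgt (by omega)
        have hle : Ideal.span {(φ ^ n) z, (φ ^ i) z} ≤ P := by
          rw [Ideal.span_le, Set.insert_subset_iff, Set.singleton_subset_iff]
          exact ⟨h1, h2⟩
        rw [hsp] at hle
        exact hP.ne_top (top_le_iff.mp hle)
    exact main _ _ s ((φ ^ i) z) hE hs1 hGv
      (Statement8Aux.key φ z b (l' + 1) hb ⟨r0, hr0⟩ hcop r hr1 hr2 n hn s hs2 _ hgcase)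
  · have hgA : ∀ P : Ideal R, P.IsMaximal → (φ ^ 0) z ∈ P → A ∈ P → False := by
      intro P hP h1 h2
      haveI := hP.isPrime
      rw [hA] at h2
      obtain ⟨j, hj, hjP⟩ := Ideal.IsPrime.prod_mem_iff.mp h2
      rw [Finset.mem_range] at hj
      have hsp := Statement8Aux.cop_pair φ z (l' + 1) hcop 0 (j + 1) (by omega) (by omega)
      have hle : Ideal.span {(φ ^ 0) z, (φ ^ (j + 1)) z} ≤ P := by
        rw [Ideal.span_le, Set.insert_subset_iff, Set.singleton_subset_iff]
        exact ⟨h1, hjP⟩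
      rw [hsp] at hle
      exact hP.ne_top (top_le_iff.mp hle)
    have hs0 : r - (φ ^ 0) r ∈ Ideal.span {gwaTau R φ z (l' + 1)} ⊔ nilradical R := by
      rw [Statement8Aux.pow_zero_apply]
      simpa using Submodule.zero_mem (Ideal.span {gwaTau R φ z (l' + 1)} ⊔ nilradical R)
    have hkey := Statement8Aux.key φ z b (l' + 1) hb ⟨r0, hr0⟩ hcop r hr1 hr2 0 (by omega)
      r hs0 A hgA
    obtain ⟨w, hw1, hw2⟩ := main e (algebraMap R (RHat R φ z (l' + 1)) A) r A he hre'
      (halg A 1) hkey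
    refine ⟨w, e * algebraMap R (RHat R φ z (l' + 1)) A, ?_, ?_, ?_⟩
    · rw [mul_comm]; exact hw1
    · rw [mul_comm]; exact hw2
    · have hτ' : algebraMap R (RHat R φ z (l' + 1)) (gwaTau R φ z (l' + 1))
          = algebraMap R (RHat R φ z (l' + 1)) A * algebraMap R (RHat R φ z (l' + 1)) z :=
        (congrArg (algebraMap R (RHat R φ z (l' + 1))) hτzA).trans (map_mul _ _ _)
      linear_combination (-(algebraMap R (RHat R φ z (l' + 1)) z)) * hw2 - (e * w) * hτ'
end

section
/- With notation as in the standing completion setup: the elements e, φ̂(e), …, φ̂^{l−1}(e) of R̂ form a complete orthogonal family of idempotents, that is, φ̂ⁱ(e)·φ̂ʲ(e) = 0 for all 0 ≤ i ≠ j ≤ l−1 and e + φ̂(e) + ⋯ + φ̂^{l−1}(e) = 1. -/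
universe u

private lemma st9_idem_pow {R : Type u} [CommRing R] (J : Ideal R) (a : R)
    (h : a * a - a ∈ J) : ∀ k : ℕ, a ^ (k + 1) - a ∈ J := by
  intro k
  induction k with
  | zero => simpa using J.zero_mem
  | succ k ih =>
    have key : a ^ (k + 2) - a = a * (a ^ (k + 1) - a) + (a * a - a) := by ring
    rw [key]
    exact J.add_mem (J.mul_mem_left _ ih) h

private lemma st9_nil_shift {R : Type u} [CommRing R] (x y c : R) (hx : x = y + c)
    (hc : IsNilpotent c) (n : ℕ) : ∃ P : ℕ, ∀ M : ℕ, P ≤ M → x ^ M ∈ Ideal.span {y ^ n} := by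
  set J : Ideal R := Ideal.span {y ^ n} with hJ
  have hy : IsNilpotent (Ideal.Quotient.mk J y) :=
    ⟨n, by rw [← map_pow]; exact Ideal.Quotient.eq_zero_iff_mem.mpr (Ideal.mem_span_singleton_self _)⟩
  have hc' : IsNilpotent (Ideal.Quotient.mk J c) := hc.map _
  have hxnil : IsNilpotent (Ideal.Quotient.mk J x) := by
    rw [hx, map_add]
    exact Commute.isNilpotent_add (Commute.all _ _) hy hc'
  obtain ⟨P, hP⟩ := hxnil
  refine ⟨P, fun M hM => ?_⟩
  have hxP : x ^ P ∈ J := by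
    rw [← Ideal.Quotient.eq_zero_iff_mem, map_pow]; exact hP
  have hsplit : x ^ M = x ^ (M - P) * x ^ P := by rw [← pow_add]; congr 1; omega
  rw [hsplit]
  exact J.mul_mem_left _ hxP

/-- (Standing completion setup: `R` commutative, `φ` a ring automorphism,
`z` a non-zero-divisor, `b` nilpotent, `l ≥ 1`, `φ^l(z) − z ∈ bR`, and `(z, φ^i(z)) = R` for
`1 ≤ i ≤ l−1`; `R̂` is the `(τ)`-adic completion of `R` where `τ = z·φ(z)⋯φ^{l−1}(z)`; `φ̂` is
the induced automorphism of `R̂`, i.e. the continuous automorphism extending `φ`; `e ∈ R̂` is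
the unique idempotent whose image in `R/(τ)` corresponds to the projection onto `R/(z)` under
the Chinese remainder isomorphism, i.e. `e ≡ 1 mod (z)` and `e ≡ 0 mod (φ^i(z))` for
`1 ≤ i ≤ l−1`.)

Then `e, φ̂(e), …, φ̂^{l−1}(e)` form a complete orthogonal family of idempotents:
`φ̂ⁱ(e)·φ̂ʲ(e) = 0` for `0 ≤ i ≠ j ≤ l−1`, and `e + φ̂(e) + ⋯ + φ̂^{l−1}(e) = 1`. -/
theorem statement9 (R : Type u) [CommRing R] (φ : R ≃+* R) (z b : R) (l : ℕ)
    (hz : z ∈ nonZeroDivisors R) (hb : IsNilpotent b) (hl : 1 ≤ l)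
    (hφl : ∃ r : R, (φ ^ l) z - z = b * r)
    (hcop : ∀ i : ℕ, 1 ≤ i → i ≤ l - 1 → Ideal.span {z, (φ ^ i) z} = ⊤)
    (φhat : RHat R φ z l ≃+* RHat R φ z l)
    (hφhat : ∀ r : R, φhat (algebraMap R (RHat R φ z l) r) = algebraMap R (RHat R φ z l) (φ r))
    (hφcont : ∀ n : ℕ, ∃ m : ℕ, ∀ x : RHat R φ z l,
      RHat.proj R φ z l m x = 0 → RHat.proj R φ z l n (φhat x) = 0)
    (e : RHat R φ z l) (he : e * e = e)
    (heval : ∃ r : R, RHat.proj R φ z l 1 e = Submodule.Quotient.mk r ∧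
      r - 1 ∈ Ideal.span {z} ∧
      ∀ i : ℕ, 1 ≤ i → i ≤ l - 1 → r ∈ Ideal.span {(φ ^ i) z}) :
    (∀ i j : ℕ, i < l → j < l → i ≠ j → (φhat ^ i) e * (φhat ^ j) e = 0) ∧
    (∑ i ∈ Finset.range l, (φhat ^ i) e) = 1 := by
  classical
  obtain ⟨r, hr1, hrz, hri⟩ := heval
  obtain ⟨r0, hr0⟩ := hφl
  set τ : R := gwaTau R φ z l with hτdef
  set I : Ideal R := Ideal.span {τ} with hIdef
  set w : ℕ → R := fun k => (φ ^ k) z with hwdef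
  -- basic facts about w and τ
  have hw0 : w 0 = z := by show (φ ^ 0) z = z; rw [pow_zero]; rfl
  have hwcomp : ∀ i d : ℕ, (φ ^ i) (w d) = w (i + d) := by
    intro i d
    show (φ ^ i) ((φ ^ d) z) = (φ ^ (i + d)) z
    rw [pow_add]; rfl
  have hτprod : τ = ∏ k ∈ Finset.range l, w k := rfl
  have hwdvd : ∀ k, k < l → w k ∣ τ := by
    intro k hk
    rw [hτprod]
    exact Finset.dvd_prod_of_mem _ (Finset.mem_range.mpr hk)
  -- the quotient submodules are powers of (τ)
  have hIn : ∀ n : ℕ, ∀ x : R, x ∈ (I ^ n • ⊤ : Submodule R R) ↔ x ∈ Ideal.span {τ ^ n} := by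
    intro n x
    have htop : (I ^ n • ⊤ : Submodule R R) = I ^ n := by
      ext y; simp [Ideal.smul_top_eq_map]
    rw [htop, hIdef, Ideal.span_singleton_pow]
  -- pairwise coprimality of the w k, k < l
  have hcp : ∀ i j : ℕ, i < l → j < l → i ≠ j → IsCoprime (w i) (w j) := by
    have key : ∀ i j : ℕ, i < j → j < l → IsCoprime (w i) (w j) := by
      intro i j hij hjl
      have h1 : Ideal.span {z, (φ ^ (j - i)) z} = ⊤ := hcop (j - i) (by omega) (by omega)
      have h2 : IsCoprime z ((φ ^ (j - i)) z) := by
        rw [← Ideal.sup_eq_top_iff_isCoprime, ← Ideal.span_insert]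
        exact h1
      have h3 := h2.map ((φ ^ i : R ≃+* R) : R →+* R)
      simp only [RingHom.coe_coe] at h3
      have e1 : (φ ^ i) z = w i := rfl
      have e2 : (φ ^ i) ((φ ^ (j - i)) z) = w j := by
        have hz' : (φ ^ (j - i)) z = w (j - i) := rfl
        rw [hz', hwcomp]
        congr 1
        omega
      rwa [e1, e2] at h3
    intro i j hi hj hij
    rcases lt_or_gt_of_ne hij with h | h
    · exact key i j h hj
    · exact (key j i h hi).symm
  -- componentwise divisibility implies membership in span {τ^n}
  have hint : ∀ n : ℕ, ∀ x : R, (∀ k, k < l → w k ^ n ∣ x) → x ∈ Ideal.span {τ ^ n} := by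
    intro n x hx
    rw [Ideal.mem_span_singleton, hτprod, ← Finset.prod_pow]
    refine Finset.prod_dvd_of_coprime ?_ (fun k hk => hx k (Finset.mem_range.mp hk))
    intro i hi j hj hij
    exact (hcp i j (Finset.mem_range.mp hi) (Finset.mem_range.mp hj) hij).pow
  -- proj basics
  have pmul : ∀ (n : ℕ) (x y : RHat R φ z l),
      RHat.proj R φ z l n (x * y) = RHat.proj R φ z l n x * RHat.proj R φ z l n y :=
    fun _ _ _ => rfl
  have palg : ∀ (n : ℕ) (s : R),
      RHat.proj R φ z l n (algebraMap R (RHat R φ z l) s) = Submodule.Quotient.mk s :=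
    fun _ _ => rfl
  have pone : ∀ n : ℕ, RHat.proj R φ z l n (1 : RHat R φ z l) = Submodule.Quotient.mk 1 :=
    fun _ => rfl
  have pker : ∀ {m n : ℕ}, m ≤ n → ∀ x : RHat R φ z l,
      RHat.proj R φ z l n x = 0 → RHat.proj R φ z l m x = 0 := by
    intro m n hmn x hx
    have hx' : x.val n = 0 := hx
    show x.val m = 0
    rw [← AdicCompletion.transitionMap_comp_eval_apply I R hmn x, hx', map_zero]
  have ptrans : ∀ {m n : ℕ}, m ≤ n → ∀ (x : RHat R φ z l) (a : R),
      RHat.proj R φ z l n x = Submodule.Quotient.mk a →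
      RHat.proj R φ z l m x = Submodule.Quotient.mk a := by
    intro m n hmn x a hx
    have hx' : x.val n = Submodule.Quotient.mk a := hx
    show x.val m = Submodule.Quotient.mk a
    rw [← AdicCompletion.transitionMap_comp_eval_apply I R hmn x, hx']
    rfl
  have pext : ∀ x : RHat R φ z l, (∀ n : ℕ, RHat.proj R φ z l n x = 0) → x = 0 := by
    intro x hx
    refine AdicCompletion.ext fun n => ?_
    rw [AdicCompletion.val_zero]
    exact hx n
  -- the key approximation lemma
  have key : ∀ n : ℕ, ∃ a : R,
      (∀ i, i < l →
        RHat.proj R φ z l n ((φhat ^ i) e) = Submodule.Quotient.mk ((φ ^ i) a)) ∧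
      (∀ i k, i < l → k < l → i ≠ k → w k ^ n ∣ (φ ^ i) a) ∧
      (∀ k, k < l → w k ^ n ∣ ((φ ^ k) a - 1)) := by
    intro n
    -- nilpotent shift data: w (k+l) differs from w k by a nilpotent
    have hshift : ∀ k : ℕ, ∃ P : ℕ, ∀ M : ℕ, P ≤ M → w (k + l) ^ M ∈ Ideal.span {w k ^ n} := by
      intro k
      refine st9_nil_shift (w (k + l)) (w k) ((φ ^ k) (b * r0)) ?_ ?_ n
      · have hdiff : w (k + l) - w k = (φ ^ k) ((φ ^ l) z - z) := by
          rw [map_sub]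
          have e1 : (φ ^ k) ((φ ^ l) z) = w (k + l) := by
            have hz' : (φ ^ l) z = w l := rfl
            rw [hz', hwcomp]
          have e2 : (φ ^ k) z = w k := rfl
          rw [e1, e2]
        rw [hr0] at hdiff
        linear_combination hdiff
      · obtain ⟨N, hN⟩ := hb
        exact ⟨N, by rw [map_mul, mul_pow, ← map_pow, hN, map_zero, zero_mul]⟩
    choose P hP using hshift
    -- the continuity chain
    choose m hm using hφcont
    set g : ℕ → ℕ := fun k => Nat.rec n (fun _ gk => max gk (m gk)) k with hgdef
    have hgsucc : ∀ k, g (k + 1) = max (g k) (m (g k)) := fun k => rfl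
    have hgmono : Monotone g := by
      apply monotone_nat_of_le_succ
      intro k
      rw [hgsucc]
      exact le_max_left _ _
    have step : ∀ (k : ℕ) (x : RHat R φ z l),
        RHat.proj R φ z l (g (k + 1)) x = 0 → RHat.proj R φ z l (g k) (φhat x) = 0 := by
      intro k x hx
      exact hm (g k) x (pker (by rw [hgsucc]; exact le_max_right _ _) x hx)
    have iter : ∀ (k j : ℕ) (x : RHat R φ z l),
        RHat.proj R φ z l (g (k + j)) x = 0 → RHat.proj R φ z l (g j) ((φhat ^ k) x) = 0 := by
      intro k
      induction k with
      | zero =>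
        intro j x hx
        rw [Nat.zero_add] at hx
        rw [pow_zero]
        exact hx
      | succ k ih =>
        intro j x hx
        have h1 : RHat.proj R φ z l (g (k + (j + 1))) x = 0 := by
          have harith : k + (j + 1) = k + 1 + j := by omega
          rwa [harith]
        have h2 := ih (j + 1) x h1
        have h3 := step j ((φhat ^ k) x) h2
        have h4 : (φhat ^ (k + 1)) x = φhat ((φhat ^ k) x) := by rw [pow_succ']; rfl
        rwa [h4]
    -- choose the big modulus M and a lift a of e mod τ^M
    set M : ℕ := max (max (g l) 1) (max n ((Finset.range l).sup P)) with hMdef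
    have hMg : g l ≤ M := le_trans (le_max_left _ _) (le_max_left _ _)
    have hM1 : 1 ≤ M := le_trans (le_max_right _ _) (le_max_left _ _)
    have hMn : n ≤ M := le_trans (le_max_left _ _) (le_max_right _ _)
    have hMP : ∀ k, k < l → P k ≤ M := fun k hk =>
      le_trans (Finset.le_sup (Finset.mem_range.mpr hk))
        (le_trans (le_max_right _ _) (le_max_right _ _))
    obtain ⟨a, ha⟩ := Submodule.Quotient.mk_surjective _ (RHat.proj R φ z l M e)
    -- approximation of φhat^i e by φ^i a
    have halg : ∀ i : ℕ, (φhat ^ i) (algebraMap R (RHat R φ z l) a)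
        = algebraMap R (RHat R φ z l) ((φ ^ i) a) := by
      intro i
      induction i with
      | zero => rw [pow_zero, pow_zero]; rfl
      | succ i ih =>
        have h4 : (φhat ^ (i + 1)) (algebraMap R (RHat R φ z l) a)
            = φhat ((φhat ^ i) (algebraMap R (RHat R φ z l) a)) := by rw [pow_succ']; rfl
        have h5 : (φ ^ (i + 1)) a = φ ((φ ^ i) a) := by rw [pow_succ']; rfl
        rw [h4, ih, hφhat, h5]
    have hd : RHat.proj R φ z l M (e - algebraMap R (RHat R φ z l) a) = 0 := by
      rw [map_sub, palg, ← ha, sub_self]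
    have happrox : ∀ i, i < l →
        RHat.proj R φ z l n ((φhat ^ i) e) = Submodule.Quotient.mk ((φ ^ i) a) := by
      intro i hi
      have hgi : RHat.proj R φ z l (g i) (e - algebraMap R (RHat R φ z l) a) = 0 :=
        pker (le_trans (hgmono hi.le) hMg) _ hd
      have h3 := iter i 0 _ hgi
      have h4 : (φhat ^ i) (e - algebraMap R (RHat R φ z l) a)
          = (φhat ^ i) e - algebraMap R (RHat R φ z l) ((φ ^ i) a) := by
        rw [map_sub, halg]
      rw [h4, map_sub, palg, sub_eq_zero] at h3
      exact h3
    -- idempotence of a mod τ^M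
    have haa : a * a - a ∈ Ideal.span {τ ^ M} := by
      have hmk : (Submodule.Quotient.mk (a * a - a) :
          R ⧸ (I ^ M • ⊤ : Submodule R R)) = 0 := by
        have hmksub : (Submodule.Quotient.mk (a * a - a) :
            R ⧸ (I ^ M • ⊤ : Submodule R R))
            = Submodule.Quotient.mk (a * a) - Submodule.Quotient.mk a :=
          Submodule.Quotient.mk_sub _
        have hmkmul : (Submodule.Quotient.mk (a * a) :
            R ⧸ (I ^ M • ⊤ : Submodule R R))
            = RHat.proj R φ z l M (e * e) := by
          rw [pmul, ← ha]; rfl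
        rw [hmksub, hmkmul, he, ha, sub_self]
      rw [Submodule.Quotient.mk_eq_zero] at hmk
      exact (hIn M _).mp hmk
    -- a is congruent to r mod τ
    have har : τ ∣ a - r := by
      have h1' : RHat.proj R φ z l 1 e = Submodule.Quotient.mk a := ptrans hM1 e a ha.symm
      have hmk : (Submodule.Quotient.mk (a - r) : R ⧸ (I ^ 1 • ⊤ : Submodule R R)) = 0 := by
        rw [Submodule.Quotient.mk_sub, ← h1', ← hr1, sub_self]
      rw [Submodule.Quotient.mk_eq_zero] at hmk
      have := (hIn 1 _).mp hmk
      rw [pow_one] at this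
      exact Ideal.mem_span_singleton.mp this
    have hzτ : z ∣ τ := hw0 ▸ hwdvd 0 (by omega)
    have hza : z ∣ a - 1 := by
      have hdecomp : a - 1 = (a - r) + (r - 1) := by ring
      rw [hdecomp]
      exact dvd_add (hzτ.trans har) (Ideal.mem_span_singleton.mp hrz)
    have hadvd : ∀ d, 1 ≤ d → d ≤ l - 1 → w d ∣ a := by
      intro d h1d h2d
      have hwr : w d ∣ r := Ideal.mem_span_singleton.mp (hri d h1d h2d)
      have hwτ : w d ∣ τ := hwdvd d (by omega)
      have hdecomp : a = (a - r) + r := by ring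
      rw [hdecomp]
      exact dvd_add (hwτ.trans har) hwr
    -- 1 - a is divisible by z^M
    have h1aM : z ^ M ∣ a - 1 := by
      have hb' : (1 - a) * (1 - a) - (1 - a) ∈ Ideal.span {τ ^ M} := by
        have hring : (1 - a) * (1 - a) - (1 - a) = a * a - a := by ring
        rw [hring]; exact haa
      have hpow := st9_idem_pow _ _ hb' (M - 1)
      rw [show M - 1 + 1 = M by omega] at hpow
      have h1 : z ^ M ∣ (1 - a) ^ M :=
        pow_dvd_pow_of_dvd (by simpa using hza.neg_right) M
      have h2'' : z ^ M ∣ τ ^ M := pow_dvd_pow_of_dvd hzτ M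
      have h3'' : τ ^ M ∣ (1 - a) ^ M - (1 - a) := Ideal.mem_span_singleton.mp hpow
      have hdecomp : a - 1 = -((1 - a) ^ M) + ((1 - a) ^ M - (1 - a)) := by ring
      rw [hdecomp]
      exact dvd_add (Dvd.dvd.neg_right h1) (h2''.trans h3'')
    -- a is divisible by w d ^ M for 1 ≤ d ≤ l - 1
    have haM : ∀ d, 1 ≤ d → d ≤ l - 1 → w d ^ M ∣ a := by
      intro d h1d h2d
      have hpow := st9_idem_pow _ _ haa (M - 1)
      rw [show M - 1 + 1 = M by omega] at hpow
      have h1 : w d ^ M ∣ a ^ M := pow_dvd_pow_of_dvd (hadvd d h1d h2d) M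
      have h2'' : w d ^ M ∣ τ ^ M := pow_dvd_pow_of_dvd (hwdvd d (by omega)) M
      have hdecomp : a = a ^ M - (a ^ M - a) := by ring
      rw [hdecomp]
      exact dvd_sub h1 (h2''.trans (Ideal.mem_span_singleton.mp hpow))
    refine ⟨a, happrox, ?_, ?_⟩
    · -- off-diagonal estimates
      intro i k hi hk hik
      rcases lt_or_gt_of_ne hik with h | h
      · have hd' : w (k - i) ^ M ∣ a := haM (k - i) (by omega) (by omega)
        have hmap := map_dvd ((φ ^ i : R ≃+* R) : R →+* R) hd'
        simp only [RingHom.coe_coe] at hmap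
        rw [map_pow, hwcomp, show i + (k - i) = k by omega] at hmap
        exact (pow_dvd_pow (w k) hMn).trans hmap
      · have hd' : w (k + l - i) ^ M ∣ a := haM (k + l - i) (by omega) (by omega)
        have hmap := map_dvd ((φ ^ i : R ≃+* R) : R →+* R) hd'
        simp only [RingHom.coe_coe] at hmap
        rw [map_pow, hwcomp, show i + (k + l - i) = k + l by omega] at hmap
        have hmem : w (k + l) ^ M ∈ Ideal.span {w k ^ n} := hP k M (hMP k hk)
        exact (Ideal.mem_span_singleton.mp hmem).trans hmap
    · -- diagonal estimates
      intro k hk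
      have hmap := map_dvd ((φ ^ k : R ≃+* R) : R →+* R) h1aM
      simp only [RingHom.coe_coe] at hmap
      rw [map_pow, map_sub, map_one] at hmap
      exact (pow_dvd_pow (w k) hMn).trans hmap
  constructor
  · -- orthogonality
    intro i j hi hj hij
    apply pext
    intro n
    obtain ⟨a, h1, h2, _⟩ := key n
    rw [pmul, h1 i hi, h1 j hj]
    have hmk : (Submodule.Quotient.mk ((φ ^ i) a) : R ⧸ (I ^ n • ⊤ : Submodule R R)) *
        Submodule.Quotient.mk ((φ ^ j) a) = Submodule.Quotient.mk ((φ ^ i) a * (φ ^ j) a) := rfl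
    rw [hmk, Submodule.Quotient.mk_eq_zero, hIn]
    apply hint
    intro k hk
    by_cases hik : i = k
    · subst hik
      exact Dvd.dvd.mul_left (h2 j i hj hi (Ne.symm hij)) _
    · exact Dvd.dvd.mul_right (h2 i k hi hk hik) _
  · -- completeness
    have hsum : ∀ n : ℕ,
        RHat.proj R φ z l n ((∑ i ∈ Finset.range l, (φhat ^ i) e) - 1) = 0 := by
      intro n
      obtain ⟨a, h1, h2, h3⟩ := key n
      rw [map_sub, map_sum, pone]
      have hs : ∀ i ∈ Finset.range l, RHat.proj R φ z l n ((φhat ^ i) e)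
          = Submodule.Quotient.mk ((φ ^ i) a) := fun i hi => h1 i (Finset.mem_range.mp hi)
      rw [Finset.sum_congr rfl hs]
      have hmkq : ∑ i ∈ Finset.range l,
          (Submodule.Quotient.mk ((φ ^ i) a) : R ⧸ (I ^ n • ⊤ : Submodule R R))
          = Submodule.Quotient.mk (∑ i ∈ Finset.range l, (φ ^ i) a) :=
        (map_sum (Submodule.mkQ _) _ _).symm
      rw [hmkq, ← Submodule.Quotient.mk_sub, Submodule.Quotient.mk_eq_zero, hIn]
      apply hint
      intro k hk
      have hsplit := Finset.sum_erase_add (Finset.range l) (fun i => (φ ^ i) a)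
        (Finset.mem_range.mpr hk)
      have hdecomp : (∑ i ∈ Finset.range l, (φ ^ i) a) - 1
          = (∑ i ∈ (Finset.range l).erase k, (φ ^ i) a) + ((φ ^ k) a - 1) := by
        rw [← hsplit]; ring
      rw [hdecomp]
      refine dvd_add (Finset.dvd_sum ?_) (h3 k hk)
      intro i hi
      exact h2 i k (Finset.mem_range.mp (Finset.mem_of_mem_erase hi)) hk
        (Finset.ne_of_mem_erase hi)
    have hzero := pext _ hsum
    exact sub_eq_zero.mp hzero
end

section
/- With notation as in the standing completion setup, let Ĥ = H(R̂, φ̂, z) be the generalized Weyl algebra over R̂ (with z denoting its image in R̂). Then the two-sided ideal of Ĥ generated by the idempotent e is all of Ĥ: Ĥ·e·Ĥ = Ĥ. -/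
universe u
section AuxLemmas

open AdicCompletion

lemma gwaSmulTopEq {R : Type u} [CommRing R] (J : Ideal R) : (J • ⊤ : Ideal R) = J := by
  rw [smul_eq_mul, Ideal.mul_top]

lemma gwaIsUnitOneSub {R : Type u} [CommRing R] (I : Ideal R) (x : AdicCompletion I R)
    (hx : x.val 1 = 0) : IsUnit (1 - x) := by
  obtain ⟨f, rfl⟩ := AdicCompletion.mk_surjective I R x
  have hf1 : f 1 ∈ I := by
    have : Submodule.Quotient.mk (p := (I ^ 1 • ⊤ : Submodule R R)) (f 1) = 0 := hx
    rw [Submodule.Quotient.mk_eq_zero] at this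
    rwa [pow_one, gwaSmulTopEq] at this
  have hfn : ∀ n, 1 ≤ n → f n ∈ I := by
    intro n hn
    have h := f.property hn
    rw [SModEq.def, Submodule.Quotient.eq, pow_one, gwaSmulTopEq] at h
    have h2 := I.sub_mem hf1 h
    simpa using h2
  set g : ℕ → R := fun n => ∑ k ∈ Finset.range n, (f n) ^ k with hg
  have key : ∀ m n, m ≤ n → g m - g n ∈ I ^ m := by
    intro m n hmn
    have hsub : f m - f n ∈ I ^ m := by
      have h := f.property hmn
      rw [SModEq.def, Submodule.Quotient.eq, gwaSmulTopEq] at h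
      exact h
    have hq : Ideal.Quotient.mk (I ^ m) (f m) = Ideal.Quotient.mk (I ^ m) (f n) :=
      (Ideal.Quotient.mk_eq_mk_iff_sub_mem _ _).mpr hsub
    rw [← Ideal.Quotient.eq]
    simp only [hg, map_sum, map_pow, hq]
    rw [← Finset.sum_range_add_sum_Ico _ hmn]
    have : ∑ k ∈ Finset.Ico m n, (Ideal.Quotient.mk (I ^ m) (f n)) ^ k = 0 := by
      refine Finset.sum_eq_zero fun k hk => ?_
      rw [Finset.mem_Ico] at hk
      rw [← map_pow, Ideal.Quotient.eq_zero_iff_mem]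
      rcases Nat.eq_zero_or_pos m with h0 | h0
      · rw [h0, pow_zero, Ideal.one_eq_top]; trivial
      have hn1 : (f n) ∈ I := hfn n (le_trans h0 hmn)
      have hm : (f n) ^ m ∈ I ^ m := Ideal.pow_mem_pow hn1 m
      have hk2 : (f n) ^ k = (f n) ^ m * (f n) ^ (k - m) := by
        rw [← pow_add]; congr 1; omega
      rw [hk2]
      exact Ideal.mul_mem_right _ _ hm
    rw [this, add_zero]
  have hcauchy : IsAdicCauchy I R g := by
    intro m n hmn
    rw [SModEq.def, Submodule.Quotient.eq, gwaSmulTopEq]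
    exact key m n hmn
  refine IsUnit.of_mul_eq_one (AdicCompletion.mk I R ⟨g, hcauchy⟩) ?_
  apply AdicCompletion.ext
  intro n
  rw [val_mul]
  show (Submodule.Quotient.mk (1 - f n)) * (Submodule.Quotient.mk (g n))
      = (1 : AdicCompletion I R).val n
  have hgeom : (1 - f n) * g n = 1 - (f n) ^ n := by
    have h := geom_sum_mul (f n) n
    simp only [hg]
    linear_combination (-1 : R) * h
  rw [val_one]
  show Ideal.Quotient.mk (I ^ n • ⊤ : Ideal R) (1 - f n) *
      Ideal.Quotient.mk (I ^ n • ⊤ : Ideal R) (g n) = 1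
  rw [← map_mul, hgeom, map_sub, map_one]
  have : Ideal.Quotient.mk (I ^ n • ⊤ : Ideal R) ((f n) ^ n) = 0 := by
    rw [Ideal.Quotient.eq_zero_iff_mem, gwaSmulTopEq]
    rcases Nat.eq_zero_or_pos n with h0 | h0
    · rw [h0, pow_zero, Ideal.one_eq_top]; trivial
    · exact Ideal.pow_mem_pow (hfn n h0) n
  rw [this, sub_zero]

end AuxLemmas

section GWALemmas

variable (S : Type u) [CommRing S] (ψ : S ≃+* S) (w : S)

local notation "B" => GWA.ofBase S ψ w
local notation "XX" => GWA.X S ψ w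
local notation "YY" => GWA.Y S ψ w

lemma RingEquiv.pow_succ_apply (k : ℕ) (r : S) : (ψ ^ (k + 1)) r = (ψ ^ k) (ψ r) := by
  rw [pow_succ]
  rfl

lemma GWA.yx_rel : YY * XX = B w := by
  have h := RingQuot.mkRingHom_rel (GWARel.yx (R := S) (φ := ψ) (z := w))
  rw [map_mul] at h
  exact h

lemma GWA.yr_rel (r : S) : YY * B r = B (ψ r) * YY := by
  have h := RingQuot.mkRingHom_rel (GWARel.yr (R := S) (φ := ψ) (z := w) r)
  rw [map_mul, map_mul] at h
  exact h

lemma GWA.ypow_r (k : ℕ) (r : S) : YY ^ k * B r = B ((ψ ^ k) r) * YY ^ k := by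
  induction k generalizing r with
  | zero => simp only [pow_zero, one_mul, mul_one]; rfl
  | succ n ih =>
    rw [RingEquiv.pow_succ_apply, pow_succ, mul_assoc, GWA.yr_rel, ← mul_assoc, ih, mul_assoc]

lemma GWA.ypow_xpow (k : ℕ) :
    YY ^ k * XX ^ k = B (∏ j ∈ Finset.range k, (ψ ^ j) w) := by
  induction k with
  | zero => simp
  | succ n ih =>
    have h1 : YY ^ (n + 1) * XX ^ (n + 1) = YY ^ n * (YY * XX) * XX ^ n := by
      rw [pow_succ, pow_succ']
      noncomm_ring
    rw [h1, GWA.yx_rel, GWA.ypow_r, mul_assoc, ih, ← map_mul, Finset.prod_range_succ,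
      mul_comm ((ψ ^ n) w)]

lemma GWA.key (k : ℕ) (e : S) :
    YY ^ k * B e * XX ^ k
      = B ((ψ ^ k) e * ∏ j ∈ Finset.range k, (ψ ^ j) w) := by
  rw [GWA.ypow_r, mul_assoc, GWA.ypow_xpow, ← map_mul]

end GWALemmas

/-- (Standing completion setup; `Ĥ = H(R̂, φ̂, z)` is the generalized Weyl
algebra over the `(τ)`-adic completion `R̂`, with `z` denoting its image in `R̂`.)  The
two-sided ideal of `Ĥ` generated by the idempotent `e` is all of `Ĥ`:  `Ĥ·e·Ĥ = Ĥ`, i.e.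
`1` is a finite sum of elements `aᵢ·e·bᵢ` with `aᵢ, bᵢ ∈ Ĥ`. -/
theorem statement10 (R : Type u) [CommRing R] (φ : R ≃+* R) (z b : R) (l : ℕ)
    (hz : z ∈ nonZeroDivisors R) (hb : IsNilpotent b) (hl : 1 ≤ l)
    (hφl : ∃ r : R, (φ ^ l) z - z = b * r)
    (hcop : ∀ i : ℕ, 1 ≤ i → i ≤ l - 1 → Ideal.span {z, (φ ^ i) z} = ⊤)
    (φhat : RHat R φ z l ≃+* RHat R φ z l)
    (hφhat : ∀ r : R, φhat (algebraMap R (RHat R φ z l) r) = algebraMap R (RHat R φ z l) (φ r))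
    (hφcont : ∀ n : ℕ, ∃ m : ℕ, ∀ x : RHat R φ z l,
      RHat.proj R φ z l m x = 0 → RHat.proj R φ z l n (φhat x) = 0)
    (e : RHat R φ z l) (he : e * e = e)
    (heval : ∃ r : R, RHat.proj R φ z l 1 e = Submodule.Quotient.mk r ∧
      r - 1 ∈ Ideal.span {z} ∧
      ∀ i : ℕ, 1 ≤ i → i ≤ l - 1 → r ∈ Ideal.span {(φ ^ i) z}) :
    ∃ (n : ℕ)
      (a c : Fin n → GWA (RHat R φ z l) φhat (algebraMap R (RHat R φ z l) z)),
      ∑ i : Fin n, a i *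
        GWA.ofBase (RHat R φ z l) φhat (algebraMap R (RHat R φ z l) z) e * c i = 1 := by
  classical
  set τ : R := gwaTau R φ z l with hτ
  set I : Ideal R := Ideal.span {τ} with hI
  set A : R →+* RHat R φ z l := (algebraMap R (RHat R φ z l)) with hA
  set π : ℕ → R := fun k => ∏ j ∈ Finset.range k, (φ ^ j) z with hπ
  -- basic facts
  have hAval : ∀ (r : R) (n : ℕ), (A r).val n =
      Submodule.Quotient.mk (p := (I ^ n • ⊤ : Submodule R R)) r := fun r n => rfl
  have hpowz : ∀ j : ℕ, (φ ^ (j + 1)) z = φ ((φ ^ j) z) := by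
    intro j
    rw [pow_succ']
    rfl
  have hphipow : ∀ (j : ℕ) (r : R), (φhat ^ j) (A r) = A ((φ ^ j) r) := by
    intro j
    induction j with
    | zero => intro r; rfl
    | succ n ih =>
      intro r
      rw [RingEquiv.pow_succ_apply, hφhat, ih, RingEquiv.pow_succ_apply]
  have hτprod : τ = ∏ j ∈ Finset.range l, (φ ^ j) z := rfl
  have hτdvd : ∀ i, 1 ≤ i → i ≤ l → (φ ^ i) z ∣ φ τ := by
    intro i h1 h2
    have hφτ : φ τ = ∏ j ∈ Finset.range l, (φ ^ (j + 1)) z := by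
      rw [hτprod, map_prod]
      exact Finset.prod_congr rfl fun j _ => (hpowz j).symm
    rw [hφτ]
    have hmem : i - 1 ∈ Finset.range l := Finset.mem_range.mpr (by omega)
    have := Finset.dvd_prod_of_mem (fun j => (φ ^ (j + 1)) z) hmem
    have heq : (i - 1) + 1 = i := by omega
    simpa only [heq] using this
  have claim : ∀ k : ℕ, ∃ s : R, k ≤ l - 1 →
      (((φhat ^ k) e).val 1 =
        Submodule.Quotient.mk (p := (I ^ 1 • ⊤ : Submodule R R)) s ∧
      s - 1 ∈ Ideal.span {(φ ^ k) z} ∧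
      ∀ i, k + 1 ≤ i → i ≤ l - 1 → s ∈ Ideal.span {(φ ^ i) z}) := by
    intro k
    induction k with
    | zero =>
      obtain ⟨r, hr1, hr2, hr3⟩ := heval
      refine ⟨r, fun _ => ⟨?_, by simpa using hr2, fun i h1 h2 => hr3 i h1 h2⟩⟩
      have : ((φhat ^ 0) e) = e := by rw [pow_zero]; rfl
      rw [this]
      exact hr1
    | succ k ih =>
      by_cases hk1 : k + 1 ≤ l - 1
      · obtain ⟨sk, hsk⟩ := ih
        obtain ⟨hsk1, hsk2, hsk3⟩ := hsk (by omega)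
        obtain ⟨m, hm⟩ := hφcont 1
        set m' : ℕ := max m 1 with hm'
        obtain ⟨r'', hr''⟩ := Submodule.Quotient.mk_surjective
          ((I ^ m' • ⊤ : Submodule R R)) (((φhat ^ k) e).val m')
        set y : RHat R φ z l := (φhat ^ k) e - A r'' with hy
        have hyval : y.val m' = 0 := by
          rw [hy, AdicCompletion.val_sub_apply, hAval, hr'', sub_self]
        have hym : y.val m = 0 := by
          rw [← y.property (le_max_left m 1), hyval, map_zero]
        have h1 : ((φhat ^ (k + 1)) e).val 1 =
            Submodule.Quotient.mk (p := (I ^ 1 • ⊤ : Submodule R R)) (φ r'') := by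
          have h0 := hm y hym
          have hφy : φhat y = (φhat ^ (k + 1)) e - A (φ r'') := by
            rw [hy, map_sub, hφhat, pow_succ']
            rfl
          have : RHat.proj R φ z l 1 (φhat y) =
              ((φhat ^ (k + 1)) e).val 1 - (A (φ r'')).val 1 := by
            rw [hφy]; rfl
          rw [this] at h0
          rw [sub_eq_zero] at h0
          rw [h0, hAval]
        have hrs : τ ∣ r'' - sk := by
          have hprop := ((φhat ^ k) e).property (le_max_right m 1)
          rw [← hr'', hsk1] at hprop
          have : Submodule.Quotient.mk (p := (I ^ 1 • ⊤ : Submodule R R)) r''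
              = Submodule.Quotient.mk (p := (I ^ 1 • ⊤ : Submodule R R)) sk := by
            rw [← hprop]
            exact (AdicCompletion.transitionMap_ideal_mk I (le_max_right m 1) r'').symm
          rw [Submodule.Quotient.eq, pow_one, gwaSmulTopEq, hI] at this
          exact Ideal.mem_span_singleton.mp this
        refine ⟨φ r'', fun _ => ⟨h1, ?_, ?_⟩⟩
        · rw [Ideal.mem_span_singleton]
          have hd1 : (φ ^ (k + 1)) z ∣ φ r'' - φ sk := by
            have : φ r'' - φ sk = φ (r'' - sk) := by rw [map_sub]
            rw [this]
            obtain ⟨c, hc⟩ := hrs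
            rw [hc, map_mul]
            exact Dvd.dvd.mul_right (hτdvd (k + 1) (by omega) (by omega)) _
          have hd2 : (φ ^ (k + 1)) z ∣ φ sk - 1 := by
            have : φ sk - 1 = φ (sk - 1) := by rw [map_sub, map_one]
            rw [this]
            obtain ⟨c, hc⟩ := Ideal.mem_span_singleton.mp hsk2
            rw [hc, map_mul, hpowz]
            exact Dvd.dvd.mul_right dvd_rfl _
          have : φ r'' - 1 = (φ r'' - φ sk) + (φ sk - 1) := by ring
          rw [this]
          exact dvd_add hd1 hd2
        · intro i hi1 hi2
          rw [Ideal.mem_span_singleton]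
          have hd1 : (φ ^ i) z ∣ φ r'' - φ sk := by
            have : φ r'' - φ sk = φ (r'' - sk) := by rw [map_sub]
            rw [this]
            obtain ⟨c, hc⟩ := hrs
            rw [hc, map_mul]
            exact Dvd.dvd.mul_right (hτdvd i (by omega) (by omega)) _
          have hd2 : (φ ^ i) z ∣ φ sk := by
            obtain ⟨c, hc⟩ := Ideal.mem_span_singleton.mp
              (hsk3 (i - 1) (by omega) (by omega))
            rw [hc, map_mul, ← hpowz]
            have heq : (i - 1) + 1 = i := by omega
            rw [heq]
            exact Dvd.dvd.mul_right dvd_rfl _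
          have : φ r'' = (φ r'' - φ sk) + φ sk := by ring
          rw [this]
          exact dvd_add hd1 hd2
      · exact ⟨0, fun h => absurd h hk1⟩
  choose sf hsf using claim
  set σ : R := ∑ k ∈ Finset.range l, sf k * π k with hσ
  set s : RHat R φ z l := ∑ k ∈ Finset.range l, (φhat ^ k) e * A (π k) with hs
  have hmkmul : ∀ a c : R,
      (Submodule.Quotient.mk (p := (I ^ 1 • ⊤ : Submodule R R)) a) *
      (Submodule.Quotient.mk (p := (I ^ 1 • ⊤ : Submodule R R)) c) =
      Submodule.Quotient.mk (p := (I ^ 1 • ⊤ : Submodule R R)) (a * c) := by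
    intro a c
    exact (map_mul (Ideal.Quotient.mk (I ^ 1 • ⊤ : Ideal R)) a c).symm
  have hsval : s.val 1 = (A σ).val 1 := by
    rw [hs, AdicCompletion.val_sum_apply, hAval, hσ]
    have hterm : ∀ k ∈ Finset.range l, ((φhat ^ k) e * A (π k)).val 1 =
        Submodule.Quotient.mk (p := (I ^ 1 • ⊤ : Submodule R R)) (sf k * π k) := by
      intro k hk
      rw [AdicCompletion.val_mul, hAval,
        (hsf k (by have := Finset.mem_range.mp hk; omega)).1, hmkmul]
    rw [Finset.sum_congr rfl hterm]
    exact (map_sum (Submodule.mkQ (I ^ 1 • ⊤ : Submodule R R)) _ _).symm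
  have hcopz : ∀ i, 1 ≤ i → i ≤ l - 1 → IsCoprime z ((φ ^ i) z) := by
    intro i h1 h2
    have h := hcop i h1 h2
    rw [Ideal.eq_top_iff_one, Ideal.mem_span_pair] at h
    obtain ⟨a, b', hab⟩ := h
    exact ⟨a, b', hab⟩
  have hcop2 : ∀ j i : ℕ, j < i → i ≤ l - 1 → IsCoprime ((φ ^ j) z) ((φ ^ i) z) := by
    intro j i hji hi
    have h0 := (hcopz (i - j) (by omega) (by omega)).map ((φ ^ j : R ≃+* R) : R →+* R)
    have hcomp : (φ ^ j) ((φ ^ (i - j)) z) = (φ ^ i) z := by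
      have h1 : (φ ^ (j + (i - j))) z = (φ ^ j) ((φ ^ (i - j)) z) := by
        rw [pow_add]; rfl
      have h2 : j + (i - j) = i := by omega
      rw [← h1, h2]
    simp only [RingEquiv.coe_toRingHom] at h0
    rwa [hcomp] at h0
  have hcoppi : ∀ i : ℕ, i ≤ l - 1 → IsCoprime (π i) ((φ ^ i) z) := by
    intro i hi
    apply IsCoprime.prod_left
    intro j hj
    exact hcop2 j i (Finset.mem_range.mp hj) hi
  have hcopσ : ∀ i : ℕ, i < l → IsCoprime σ ((φ ^ i) z) := by
    intro i hil
    have hi : i ≤ l - 1 := by omega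
    have hmem : σ - π i ∈ Ideal.span {(φ ^ i) z} := by
      have hsplit : σ - π i = (sf i - 1) * π i +
          ∑ k ∈ (Finset.range l).erase i, sf k * π k := by
        rw [hσ, ← Finset.add_sum_erase _ _ (Finset.mem_range.mpr hil)]
        ring
      rw [hsplit]
      refine Ideal.add_mem _ ?_ ?_
      · exact Ideal.mul_mem_right _ _ ((hsf i hi).2.1)
      · refine Ideal.sum_mem _ fun k hk => ?_
        obtain ⟨hkne, hkr⟩ := Finset.mem_erase.mp hk
        rcases lt_or_gt_of_ne hkne with hlt | hgt
        · exact Ideal.mul_mem_right _ _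
            ((hsf k (by have := Finset.mem_range.mp hkr; omega)).2.2 i (by omega) hi)
        · refine Ideal.mul_mem_left _ _ ?_
          rw [Ideal.mem_span_singleton]
          exact Finset.dvd_prod_of_mem _ (Finset.mem_range.mpr (by omega))
    obtain ⟨c, hc⟩ := Ideal.mem_span_singleton.mp hmem
    have hσeq : σ = π i + (φ ^ i) z * c := by rw [← hc]; ring
    rw [hσeq]
    exact (hcoppi i hi).add_mul_left_left c
  have hcopτ : IsCoprime σ τ := by
    rw [hτprod]
    exact IsCoprime.prod_right fun i hi => hcopσ i (Finset.mem_range.mp hi)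
  obtain ⟨aa, bb, hab⟩ := hcopτ
  have hx1 : (1 - s * A aa).val 1 = 0 := by
    have hform : 1 - s * A aa = A bb * A τ - (s - A σ) * A aa := by
      have h2 : A aa * A σ + A bb * A τ = 1 := by
        rw [← map_mul, ← map_mul, ← map_add, hab, map_one]
      linear_combination -h2
    rw [hform, AdicCompletion.val_sub_apply, AdicCompletion.val_mul, AdicCompletion.val_mul]
    have hτ0 : (A τ).val 1 = 0 := by
      rw [hAval, Submodule.Quotient.mk_eq_zero, pow_one, gwaSmulTopEq, hI]
      exact Ideal.mem_span_singleton.mpr dvd_rfl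
    have hδ0 : (s - A σ).val 1 = 0 := by
      rw [AdicCompletion.val_sub_apply, hsval, sub_self]
    rw [hτ0, hδ0, mul_zero, zero_mul, sub_zero]
  have hunit : IsUnit (s * A aa) := by
    have h := gwaIsUnitOneSub I (1 - s * A aa) hx1
    rwa [sub_sub_cancel] at h
  have hsunit : IsUnit s := isUnit_of_mul_isUnit_left hunit
  obtain ⟨u, hu⟩ := hsunit
  set v : RHat R φ z l := ((u⁻¹ : (RHat R φ z l)ˣ) : RHat R φ z l) with hv
  have hsv : v * s = 1 := by
    rw [← hu, hv]
    exact u.inv_mul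
  -- final assembly
  refine ⟨l,
    fun i => GWA.ofBase (RHat R φ z l) φhat (A z) v *
      (GWA.Y (RHat R φ z l) φhat (A z)) ^ (i : ℕ),
    fun i => (GWA.X (RHat R φ z l) φhat (A z)) ^ (i : ℕ), ?_⟩
  have hterm : ∀ i : ℕ,
      (GWA.Y (RHat R φ z l) φhat (A z)) ^ i *
        GWA.ofBase (RHat R φ z l) φhat (A z) e *
        (GWA.X (RHat R φ z l) φhat (A z)) ^ i
      = GWA.ofBase (RHat R φ z l) φhat (A z) ((φhat ^ i) e * A (π i)) := by
    intro i
    rw [GWA.key]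
    congr 1
    congr 1
    show ∏ j ∈ Finset.range i, (φhat ^ j) (A z) = A (∏ j ∈ Finset.range i, (φ ^ j) z)
    rw [map_prod A (fun j => (φ ^ j) z) (Finset.range i)]
    exact Finset.prod_congr rfl fun j _ => hphipow j z
  have hstep : ∀ i : Fin l,
      (GWA.ofBase (RHat R φ z l) φhat (A z) v *
        (GWA.Y (RHat R φ z l) φhat (A z)) ^ (i : ℕ)) *
        GWA.ofBase (RHat R φ z l) φhat (A z) e *
        (GWA.X (RHat R φ z l) φhat (A z)) ^ (i : ℕ)
      = GWA.ofBase (RHat R φ z l) φhat (A z) (v * ((φhat ^ (i : ℕ)) e * A (π i))) := by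
    intro i
    have hassoc : (GWA.ofBase (RHat R φ z l) φhat (A z) v *
        (GWA.Y (RHat R φ z l) φhat (A z)) ^ (i : ℕ)) *
        GWA.ofBase (RHat R φ z l) φhat (A z) e *
        (GWA.X (RHat R φ z l) φhat (A z)) ^ (i : ℕ)
        = GWA.ofBase (RHat R φ z l) φhat (A z) v *
          ((GWA.Y (RHat R φ z l) φhat (A z)) ^ (i : ℕ) *
            GWA.ofBase (RHat R φ z l) φhat (A z) e *
            (GWA.X (RHat R φ z l) φhat (A z)) ^ (i : ℕ)) := by
      noncomm_ring
    rw [hassoc, hterm, ← map_mul]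
  rw [Finset.sum_congr rfl (fun i _ => hstep i)]
  rw [← map_sum, ← Finset.mul_sum]
  have hfin : ∑ i : Fin l, ((φhat ^ (i : ℕ)) e * A (π (i : ℕ))) = s := by
    rw [hs]
    exact Fin.sum_univ_eq_sum_range (fun k => (φhat ^ k) e * A (π k)) l
  rw [hfin, hsv, map_one]
end
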